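/- arXiv:1812.03081 — 2 statements merged into one kernel-verified Lean document; each statement's English description precedes it below -/
import Mathlib

section
/- Let d : YoungDiagram → ℕ count standard Young tableaux. Then for every n : ℕ the set {λ : YoungDiagram | λ.card = n} is finite and the sum of (d λ)^2 over this set equals n! (so that λ ↦ (d λ)^2 / n! defines a probability distribution, the Plancherel measure of the symmetric group S_n). -/
/-- `CoversBelow μ lam` (written `μ ⋖ lam` informally): `μ ≤ lam` and
`μ.card + 1 = lam.card`. -/
def CoversBelow (μ lam : YoungDiagram) : Prop :=
  μ ≤ lam ∧ μ.card + 1 = lam.card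

/-- `d : YoungDiagram → ℕ` counts standard Young tableaux:
`d ⊥ = 1` and, for every `lam ≠ ⊥`, `d lam` is the sum of `d μ` over the
(finite) set of diagrams `μ` covered by `lam`. -/
def CountsSYT (d : YoungDiagram → ℕ) : Prop :=
  d ⊥ = 1 ∧ ∀ lam : YoungDiagram, lam ≠ ⊥ →
    d lam = ∑ᶠ μ ∈ {μ : YoungDiagram | CoversBelow μ lam}, d μ

open Finset

namespace SYTAux


lemma fst_lt_card {μ : YoungDiagram} {i j : ℕ} (h : (i, j) ∈ μ) : i < μ.card := by
  have hsub : (Finset.range (i + 1)).image (fun k => (k, j)) ⊆ μ.cells := by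
    intro c hc
    simp only [Finset.mem_image, Finset.mem_range] at hc
    obtain ⟨k, hk, rfl⟩ := hc
    exact μ.mem_cells _ |>.2 (μ.up_left_mem (Nat.lt_succ_iff.1 hk) le_rfl h)
  have := Finset.card_le_card hsub
  rwa [Finset.card_image_of_injective _ (fun a b hab => (Prod.mk.injEq _ _ _ _ ▸ hab : _ ∧ _).1),
    Finset.card_range, Nat.succ_le_iff] at this

lemma snd_lt_card {μ : YoungDiagram} {i j : ℕ} (h : (i, j) ∈ μ) : j < μ.card := by
  have hsub : (Finset.range (j + 1)).image (fun k => (i, k)) ⊆ μ.cells := by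
    intro c hc
    simp only [Finset.mem_image, Finset.mem_range] at hc
    obtain ⟨k, hk, rfl⟩ := hc
    exact μ.mem_cells _ |>.2 (μ.up_left_mem le_rfl (Nat.lt_succ_iff.1 hk) h)
  have := Finset.card_le_card hsub
  rwa [Finset.card_image_of_injective _ (fun a b hab => (Prod.mk.injEq _ _ _ _ ▸ hab : _ ∧ _).2),
    Finset.card_range, Nat.succ_le_iff] at this

lemma finite_card_eq (n : ℕ) : {lam : YoungDiagram | lam.card = n}.Finite := by
  have hinj : Set.InjOn YoungDiagram.cells {lam : YoungDiagram | lam.card = n} :=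
    fun a _ b _ h => YoungDiagram.ext h
  have himg : YoungDiagram.cells '' {lam : YoungDiagram | lam.card = n} ⊆
      ↑((Finset.range n ×ˢ Finset.range n).powerset) := by
    rintro s ⟨lam, hlam, rfl⟩
    simp only [Finset.coe_powerset, Set.mem_preimage, Set.mem_powerset_iff]
    intro c hc
    obtain ⟨i, j⟩ := c
    have hm : (i, j) ∈ lam := lam.mem_cells _ |>.1 hc
    simp only [Finset.coe_product, Set.mem_prod, Finset.mem_coe, Finset.mem_range]
    exact ⟨hlam ▸ fst_lt_card hm, hlam ▸ snd_lt_card hm⟩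
  exact Set.Finite.of_finite_image (((Finset.range n ×ˢ Finset.range n).powerset).finite_toSet.subset himg) hinj


/-- addability of row i -/
def Addable (μ : YoungDiagram) (i : ℕ) : Prop := i = 0 ∨ μ.rowLen i < μ.rowLen (i - 1)

/-- removability of row i -/
def Removable (μ : YoungDiagram) (i : ℕ) : Prop := μ.rowLen (i + 1) < μ.rowLen i

lemma cover_iff_insert {μ lam : YoungDiagram} :
    CoversBelow μ lam ↔ ∃ c, c ∉ μ.cells ∧ lam.cells = insert c μ.cells := by
  constructor
  · rintro ⟨hle, hcard⟩
    have hcard' : μ.cells.card + 1 = lam.cells.card := hcard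
    have hsub : μ.cells ⊆ lam.cells := YoungDiagram.cells_subset_iff.2 hle
    have h1 : (lam.cells \ μ.cells).card = 1 := by
      rw [Finset.card_sdiff_of_subset hsub]; omega
    obtain ⟨c, hc⟩ := Finset.card_eq_one.1 h1
    have hcmem : c ∈ lam.cells \ μ.cells := hc ▸ Finset.mem_singleton_self c
    refine ⟨c, (Finset.mem_sdiff.1 hcmem).2, ?_⟩
    apply Finset.Subset.antisymm
    · intro x hx
      by_cases hxμ : x ∈ μ.cells
      · exact Finset.mem_insert_of_mem hxμ
      · have hx' : x ∈ lam.cells \ μ.cells := Finset.mem_sdiff.2 ⟨hx, hxμ⟩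
        rw [hc, Finset.mem_singleton] at hx'
        subst hx'
        exact Finset.mem_insert_self x _
    · exact Finset.insert_subset (Finset.mem_sdiff.1 hcmem).1 hsub
  · rintro ⟨c, hc, hcells⟩
    refine ⟨?_, ?_⟩
    · rw [← YoungDiagram.cells_subset_iff, hcells]
      exact Finset.subset_insert c μ.cells
    · show μ.cells.card + 1 = lam.cells.card
      rw [hcells, Finset.card_insert_of_notMem hc]

lemma add_spec {μ lam : YoungDiagram} {i j : ℕ} (hc : (i, j) ∉ μ.cells)
    (hcells : lam.cells = insert (i, j) μ.cells) :
    j = μ.rowLen i ∧ Addable μ i := by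
  have hmemlam : ∀ p : ℕ × ℕ, p ∈ lam ↔ p = (i, j) ∨ p ∈ μ := by
    intro p
    rw [← YoungDiagram.mem_cells, hcells, Finset.mem_insert, YoungDiagram.mem_cells]
  have hij_lam : (i, j) ∈ lam := (hmemlam _).2 (Or.inl rfl)
  have hge : μ.rowLen i ≤ j := by
    by_contra h
    exact hc (μ.mem_cells _ |>.2 (YoungDiagram.mem_iff_lt_rowLen.2 (by omega)))
  have hle : j ≤ μ.rowLen i := by
    by_contra h
    push_neg at h
    have h1 : (i, μ.rowLen i) ∈ lam := lam.up_left_mem le_rfl (le_of_lt h) hij_lam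
    rcases (hmemlam _).1 h1 with heq | hmem
    · exact absurd (Prod.mk.injEq .. ▸ heq : _ ∧ _).2 (Nat.ne_of_lt h)
    · exact absurd (YoungDiagram.mem_iff_lt_rowLen.1 hmem) (lt_irrefl _)
  have hj : j = μ.rowLen i := le_antisymm hle hge
  refine ⟨hj, ?_⟩
  rcases Nat.eq_zero_or_pos i with hi | hi
  · exact Or.inl hi
  · right
    have h1 : (i - 1, j) ∈ lam := lam.up_left_mem (Nat.sub_le i 1) le_rfl hij_lam
    rcases (hmemlam _).1 h1 with heq | hmem
    · exact absurd (Prod.mk.injEq .. ▸ heq : _ ∧ _).1 (by omega)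
    · have := YoungDiagram.mem_iff_lt_rowLen.1 hmem
      omega

lemma del_spec {μ lam : YoungDiagram} {i j : ℕ} (hc : (i, j) ∈ lam.cells)
    (hcells : μ.cells = lam.cells.erase (i, j)) :
    j + 1 = lam.rowLen i ∧ Removable lam i := by
  have hmemμ : ∀ p : ℕ × ℕ, p ∈ μ ↔ p ≠ (i, j) ∧ p ∈ lam := by
    intro p
    rw [← YoungDiagram.mem_cells, hcells, Finset.mem_erase, YoungDiagram.mem_cells]
  have hij : (i, j) ∉ μ := fun h => absurd rfl ((hmemμ _).1 h).1
  have hlt : j < lam.rowLen i := YoungDiagram.mem_iff_lt_rowLen.1 (lam.mem_cells _ |>.1 hc)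
  have h1 : (i, j + 1) ∉ lam := by
    intro h
    have : (i, j + 1) ∈ μ := (hmemμ _).2 ⟨by simp, h⟩
    exact hij (μ.up_left_mem le_rfl (Nat.le_succ j) this)
  have h2 : (i + 1, j) ∉ lam := by
    intro h
    have : (i + 1, j) ∈ μ := (hmemμ _).2 ⟨by simp, h⟩
    exact hij (μ.up_left_mem (Nat.le_succ i) le_rfl this)
  have e1 : lam.rowLen i ≤ j + 1 := by
    by_contra h; exact h1 (YoungDiagram.mem_iff_lt_rowLen.2 (by omega))
  have e2 : lam.rowLen (i + 1) ≤ j := by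
    by_contra h; exact h2 (YoungDiagram.mem_iff_lt_rowLen.2 (by omega))
  exact ⟨by omega, by unfold Removable; omega⟩



instance (μ : YoungDiagram) : DecidablePred (Addable μ) := fun _ => inferInstanceAs (Decidable (_ ∨ _))
instance (μ : YoungDiagram) : DecidablePred (Removable μ) := fun _ => inferInstanceAs (Decidable (_ < _))

def addCellD (μ : YoungDiagram) (i : ℕ) : YoungDiagram where
  cells := if Addable μ i then insert (i, μ.rowLen i) μ.cells else μ.cells
  isLowerSet := by
    split_ifs with h
    · rintro ⟨x, y⟩ ⟨a, b⟩ hle hp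
      simp only [Finset.coe_insert, Set.mem_insert_iff, Finset.mem_coe] at hp ⊢
      obtain ⟨hax, hby⟩ : a ≤ x ∧ b ≤ y := Prod.mk_le_mk.1 hle
      rcases hp with heq | hp
      · obtain ⟨hx, hy⟩ : x = i ∧ y = μ.rowLen i := Prod.mk.injEq .. ▸ heq
        have hai : a ≤ i := hx ▸ hax
        have hbr : b ≤ μ.rowLen i := hy ▸ hby
        by_cases hb : b < μ.rowLen i
        · exact Or.inr (μ.mem_cells _ |>.2 (YoungDiagram.mem_iff_lt_rowLen.2
            (lt_of_lt_of_le hb (μ.rowLen_anti a i hai))))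
        · have hbeq : b = μ.rowLen i := by omega
          by_cases ha : a = i
          · left; rw [ha, hbeq]
          · right
            have h0 : i ≠ 0 := by omega
            have hlt : μ.rowLen i < μ.rowLen (i - 1) := h.resolve_left h0
            have := μ.rowLen_anti a (i - 1) (by omega)
            exact μ.mem_cells _ |>.2 (YoungDiagram.mem_iff_lt_rowLen.2 (by omega))
      · exact Or.inr (μ.mem_cells _ |>.2 (μ.up_left_mem hax hby (μ.mem_cells _ |>.1 hp)))
    · exact μ.isLowerSet

def delCellD (μ : YoungDiagram) (i : ℕ) : YoungDiagram where
  cells := if Removable μ i then μ.cells.erase (i, μ.rowLen i - 1) else μ.cells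
  isLowerSet := by
    split_ifs with h
    · rintro ⟨x, y⟩ ⟨a, b⟩ hle hp
      simp only [Finset.coe_erase, Set.mem_diff, Finset.mem_coe, Set.mem_singleton_iff] at hp ⊢
      obtain ⟨hax, hby⟩ : a ≤ x ∧ b ≤ y := Prod.mk_le_mk.1 hle
      obtain ⟨hpμ, hpne⟩ := hp
      have hyx : y < μ.rowLen x := YoungDiagram.mem_iff_lt_rowLen.1 (μ.mem_cells _ |>.1 hpμ)
      refine ⟨μ.mem_cells _ |>.2 (μ.up_left_mem hax hby (μ.mem_cells _ |>.1 hpμ)), ?_⟩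
      intro heq
      obtain ⟨ha, hb⟩ : a = i ∧ b = μ.rowLen i - 1 := Prod.mk.injEq .. ▸ heq
      apply hpne
      have hRem : μ.rowLen (i + 1) < μ.rowLen i := h
      have hxi : μ.rowLen x ≤ μ.rowLen i := μ.rowLen_anti i x (by omega)
      have hx : x = i := by
        by_contra hxx
        have := μ.rowLen_anti (i + 1) x (by omega)
        omega
      have hyy : y = μ.rowLen i - 1 := by omega
      simp [hx, hyy]
    · exact μ.isLowerSet

variable {μ : YoungDiagram} {i : ℕ}

lemma addCellD_cells (h : Addable μ i) :
    (addCellD μ i).cells = insert (i, μ.rowLen i) μ.cells := if_pos h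

lemma delCellD_cells (h : Removable μ i) :
    (delCellD μ i).cells = μ.cells.erase (i, μ.rowLen i - 1) := if_pos h

lemma corner_not_mem (μ : YoungDiagram) (i : ℕ) : (i, μ.rowLen i) ∉ μ.cells := by
  rw [YoungDiagram.mem_cells, YoungDiagram.mem_iff_lt_rowLen]; omega

lemma corner_mem (h : Removable μ i) : (i, μ.rowLen i - 1) ∈ μ.cells := by
  rw [YoungDiagram.mem_cells, YoungDiagram.mem_iff_lt_rowLen]
  have : μ.rowLen (i + 1) < μ.rowLen i := h
  omega


lemma coversBelow_addCellD (h : Addable μ i) : CoversBelow μ (addCellD μ i) :=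
  cover_iff_insert.2 ⟨_, corner_not_mem μ i, addCellD_cells h⟩

lemma coversBelow_delCellD (h : Removable μ i) : CoversBelow (delCellD μ i) μ :=
  cover_iff_insert.2 ⟨(i, μ.rowLen i - 1), by rw [delCellD_cells h]; exact Finset.notMem_erase _ _,
    (Finset.insert_erase (corner_mem h)).symm.trans (by rw [delCellD_cells h])⟩

lemma cover_above_eq {ν : YoungDiagram} (hcov : CoversBelow μ ν) :
    ∃ i, Addable μ i ∧ ν = addCellD μ i := by
  obtain ⟨⟨i, j⟩, hc, hcells⟩ := cover_iff_insert.1 hcov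
  obtain ⟨hj, hadd⟩ := add_spec hc hcells
  exact ⟨i, hadd, YoungDiagram.ext (by rw [hcells, addCellD_cells hadd, hj])⟩

lemma cover_below_eq {ρ : YoungDiagram} (hcov : CoversBelow ρ μ) :
    ∃ i, Removable μ i ∧ ρ = delCellD μ i := by
  obtain ⟨⟨i, j⟩, hc, hcells⟩ := cover_iff_insert.1 hcov
  have hmem : (i, j) ∈ μ.cells := hcells ▸ Finset.mem_insert_self _ _
  have herase : ρ.cells = μ.cells.erase (i, j) := by
    rw [hcells, Finset.erase_insert hc]
  obtain ⟨hj, hrem⟩ := del_spec hmem herase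
  have hjj : j = μ.rowLen i - 1 := by omega
  exact ⟨i, hrem, YoungDiagram.ext (by rw [herase, delCellD_cells hrem, hjj])⟩

def addables (μ : YoungDiagram) : Finset ℕ := (Finset.range (μ.card + 1)).filter (Addable μ)
def removables (μ : YoungDiagram) : Finset ℕ := (Finset.range (μ.card + 1)).filter (Removable μ)

lemma lt_card_of_rowLen_pos (h : 0 < μ.rowLen i) : i < μ.card :=
  fst_lt_card (YoungDiagram.mem_iff_lt_rowLen.2 h)

lemma mem_addables {μ : YoungDiagram} {i : ℕ} : i ∈ addables μ ↔ Addable μ i := by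
  rw [addables, Finset.mem_filter, Finset.mem_range]
  refine ⟨fun h => h.2, fun h => ⟨?_, h⟩⟩
  rcases h with h | h
  · omega
  · have : i - 1 < μ.card := lt_card_of_rowLen_pos (by omega)
    omega

lemma mem_removables {μ : YoungDiagram} {i : ℕ} : i ∈ removables μ ↔ Removable μ i := by
  rw [removables, Finset.mem_filter, Finset.mem_range]
  refine ⟨fun h => h.2, fun h => ⟨?_, h⟩⟩
  have : i < μ.card := lt_card_of_rowLen_pos (by have : μ.rowLen (i+1) < μ.rowLen i := h; omega)
  omega

lemma addables_eq (μ : YoungDiagram) :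
    addables μ = insert 0 ((removables μ).image (· + 1)) := by
  ext i
  rw [mem_addables, Finset.mem_insert]
  constructor
  · intro h
    rcases Nat.eq_zero_or_pos i with h0 | h0
    · exact Or.inl h0
    · right
      have hlt : μ.rowLen i < μ.rowLen (i - 1) := h.resolve_left (by omega)
      refine Finset.mem_image.2 ⟨i - 1, mem_removables.2 ?_, by omega⟩
      show μ.rowLen (i - 1 + 1) < μ.rowLen (i - 1)
      rw [Nat.sub_add_cancel h0]
      exact hlt
  · rintro (rfl | h)
    · exact Or.inl rfl
    · obtain ⟨k, hk, rfl⟩ := Finset.mem_image.1 h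
      exact Or.inr (by have h' : μ.rowLen (k + 1) < μ.rowLen k := mem_removables.1 hk; simpa using h')

lemma card_addables (μ : YoungDiagram) :
    (addables μ).card = (removables μ).card + 1 := by
  rw [addables_eq, Finset.card_insert_of_notMem, Finset.card_image_of_injective _
    (fun a b => by omega)]
  intro h
  obtain ⟨k, _, hk⟩ := Finset.mem_image.1 h
  omega

lemma card_pos_iff_ne_bot {μ : YoungDiagram} : μ ≠ ⊥ ↔ 0 < μ.card := by
  constructor
  · intro h
    by_contra hc
    refine h (YoungDiagram.ext ?_)
    have hc' : ¬ 0 < μ.cells.card := hc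
    have h0 : μ.cells.card = 0 := by omega
    simpa using Finset.card_eq_zero.1 h0
  · intro h hb
    rw [hb] at h
    simp [YoungDiagram.card] at h

attribute [local instance] Classical.propDecidable

noncomputable def S (n : ℕ) : Finset YoungDiagram := (finite_card_eq n).toFinset

lemma mem_S {n : ℕ} {lam : YoungDiagram} : lam ∈ S n ↔ lam.card = n :=
  Set.Finite.mem_toFinset _

lemma belowSet_finite (lam : YoungDiagram) : {μ : YoungDiagram | CoversBelow μ lam}.Finite :=
  (finite_card_eq (lam.card - 1)).subset (fun μ hμ => by
    have := hμ.2; simp only [Set.mem_setOf_eq]; omega)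

lemma aboveSet_finite (μ : YoungDiagram) : {ν : YoungDiagram | CoversBelow μ ν}.Finite :=
  (finite_card_eq (μ.card + 1)).subset (fun ν hν => hν.2.symm)

noncomputable def belowF (lam : YoungDiagram) : Finset YoungDiagram :=
  (belowSet_finite lam).toFinset

noncomputable def aboveF (μ : YoungDiagram) : Finset YoungDiagram :=
  (aboveSet_finite μ).toFinset

lemma mem_belowF {lam μ : YoungDiagram} : μ ∈ belowF lam ↔ CoversBelow μ lam :=
  Set.Finite.mem_toFinset _

lemma mem_aboveF {lam μ : YoungDiagram} : lam ∈ aboveF μ ↔ CoversBelow μ lam :=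
  Set.Finite.mem_toFinset _

lemma card_aboveF (μ : YoungDiagram) : (aboveF μ).card = (addables μ).card := by
  refine (Finset.card_bij (fun i _ => addCellD μ i) ?_ ?_ ?_).symm
  · intro a ha
    exact mem_aboveF.2 (coversBelow_addCellD (mem_addables.1 ha))
  · intro a ha b hb hab
    have hab' : addCellD μ a = addCellD μ b := hab
    have haa := mem_addables.1 ha
    have hbb := mem_addables.1 hb
    have : (a, μ.rowLen a) ∈ (addCellD μ b).cells := by
      rw [← hab', addCellD_cells haa]; exact Finset.mem_insert_self _ _
    rw [addCellD_cells hbb, Finset.mem_insert] at this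
    rcases this with h | h
    · exact (Prod.mk.injEq .. ▸ h : _ ∧ _).1
    · exact absurd h (corner_not_mem μ a)
  · intro ν hν
    obtain ⟨i, hi, rfl⟩ := cover_above_eq (mem_aboveF.1 hν)
    exact ⟨i, mem_addables.2 hi, rfl⟩

lemma card_belowF (μ : YoungDiagram) : (belowF μ).card = (removables μ).card := by
  refine (Finset.card_bij (fun i _ => delCellD μ i) ?_ ?_ ?_).symm
  · intro a ha
    exact mem_belowF.2 (coversBelow_delCellD (mem_removables.1 ha))
  · intro a ha b hb hab
    have haa := mem_removables.1 ha
    have hbb := mem_removables.1 hb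
    have hab' : delCellD μ a = delCellD μ b := hab
    have h1 : (a, μ.rowLen a - 1) ∉ (delCellD μ a).cells := by
      rw [delCellD_cells haa]; exact Finset.notMem_erase _ _
    rw [hab', delCellD_cells hbb, Finset.mem_erase] at h1
    have h2 : ¬ ((a, μ.rowLen a - 1) ≠ (b, μ.rowLen b - 1)) := fun hne => h1 ⟨hne, corner_mem haa⟩
    push_neg at h2
    exact (Prod.mk.injEq .. ▸ h2 : _ ∧ _).1
  · intro ρ hρ
    obtain ⟨i, hi, rfl⟩ := cover_below_eq (mem_belowF.1 hρ)
    exact ⟨i, mem_removables.2 hi, rfl⟩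

lemma card_above_below (μ : YoungDiagram) :
    (aboveF μ).card = (belowF μ).card + 1 := by
  rw [card_aboveF, card_belowF, card_addables]


lemma diamond {μ ν : YoungDiagram} (h : μ.card = ν.card) (hne : μ ≠ ν) :
    (aboveF μ ∩ aboveF ν).card = (belowF μ ∩ belowF ν).card := by
  have hcards : (μ ⊔ ν).card + (μ ⊓ ν).card = μ.card + ν.card := by
    show ((μ ⊔ ν).cells).card + ((μ ⊓ ν).cells).card = μ.cells.card + ν.cells.card
    rw [YoungDiagram.cells_sup, YoungDiagram.cells_inf]
    exact Finset.card_union_add_card_inter _ _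
  have hinf_le : (μ ⊓ ν).cells ⊆ μ.cells :=
    YoungDiagram.cells_subset_iff.2 inf_le_left
  have hklt : (μ ⊓ ν).card < μ.card := by
    have hle : (μ ⊓ ν).card ≤ μ.card := Finset.card_le_card hinf_le
    rcases lt_or_eq_of_le hle with hlt | heq
    · exact hlt
    · exfalso
      have hcellseq : (μ ⊓ ν).cells = μ.cells :=
        Finset.eq_of_subset_of_card_le hinf_le (le_of_eq heq.symm)
      have : μ ≤ ν := inf_eq_left.1 (YoungDiagram.ext hcellseq)
      have hsub2 : μ.cells ⊆ ν.cells := YoungDiagram.cells_subset_iff.2 this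
      exact hne (YoungDiagram.ext (Finset.eq_of_subset_of_card_le hsub2 (le_of_eq h.symm)))
  by_cases hk : (μ ⊓ ν).card = μ.card - 1
  · have habove : aboveF μ ∩ aboveF ν = {μ ⊔ ν} := by
      ext lam
      rw [Finset.mem_inter, mem_aboveF, mem_aboveF, Finset.mem_singleton]
      constructor
      · rintro ⟨⟨hle1, hc1⟩, ⟨hle2, _⟩⟩
        have hsuple : (μ ⊔ ν).cells ⊆ lam.cells :=
          YoungDiagram.cells_subset_iff.2 (sup_le hle1 hle2)
        have hcl : (μ ⊔ ν).card ≤ lam.card := Finset.card_le_card hsuple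
        exact (YoungDiagram.ext (Finset.eq_of_subset_of_card_le hsuple (show lam.card ≤ (μ ⊔ ν).card by omega))).symm
      · rintro rfl
        exact ⟨⟨le_sup_left, by omega⟩, ⟨le_sup_right, by omega⟩⟩
    have hbelow : belowF μ ∩ belowF ν = {μ ⊓ ν} := by
      ext ρ
      rw [Finset.mem_inter, mem_belowF, mem_belowF, Finset.mem_singleton]
      constructor
      · rintro ⟨⟨hle1, hc1⟩, ⟨hle2, _⟩⟩
        have hsub : ρ.cells ⊆ (μ ⊓ ν).cells :=
          YoungDiagram.cells_subset_iff.2 (le_inf hle1 hle2)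
        have hcl : ρ.card ≤ (μ ⊓ ν).card := Finset.card_le_card hsub
        exact YoungDiagram.ext (Finset.eq_of_subset_of_card_le hsub (show (μ ⊓ ν).card ≤ ρ.card by omega))
      · rintro rfl
        exact ⟨⟨inf_le_left, by omega⟩, ⟨inf_le_right, by omega⟩⟩
    rw [habove, hbelow, Finset.card_singleton, Finset.card_singleton]
  · have habove : aboveF μ ∩ aboveF ν = ∅ := by
      rw [Finset.eq_empty_iff_forall_notMem]
      intro lam hlam
      obtain ⟨h1, h2⟩ := Finset.mem_inter.1 hlam
      obtain ⟨hle1, hc1⟩ := mem_aboveF.1 h1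
      obtain ⟨hle2, _⟩ := mem_aboveF.1 h2
      have hsuple : (μ ⊔ ν).cells ⊆ lam.cells :=
        YoungDiagram.cells_subset_iff.2 (sup_le hle1 hle2)
      have hcl : (μ ⊔ ν).card ≤ lam.card := Finset.card_le_card hsuple
      omega
    have hbelow : belowF μ ∩ belowF ν = ∅ := by
      rw [Finset.eq_empty_iff_forall_notMem]
      intro ρ hρ
      obtain ⟨h1, h2⟩ := Finset.mem_inter.1 hρ
      obtain ⟨hle1, hc1⟩ := mem_belowF.1 h1
      obtain ⟨hle2, _⟩ := mem_belowF.1 h2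
      have hsub : ρ.cells ⊆ (μ ⊓ ν).cells :=
        YoungDiagram.cells_subset_iff.2 (le_inf hle1 hle2)
      have hcl : ρ.card ≤ (μ ⊓ ν).card := Finset.card_le_card hsub
      omega
    rw [habove, hbelow]

lemma rec_finset {d : YoungDiagram → ℕ} (hd : CountsSYT d) {lam : YoungDiagram}
    (h : lam ≠ ⊥) : d lam = ∑ μ ∈ belowF lam, d μ := by
  rw [hd.2 lam h, ← Set.Finite.coe_toFinset (belowSet_finite lam), finsum_mem_coe_finset]
  rfl

lemma belowF_filter {lam : YoungDiagram} {n : ℕ} (h : lam.card = n + 1) :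
    belowF lam = (S n).filter (fun μ => CoversBelow μ lam) := by
  ext μ
  rw [mem_belowF, Finset.mem_filter, mem_S]
  exact ⟨fun hc => ⟨by have := hc.2; omega, hc⟩, fun hc => hc.2⟩

lemma aboveF_filter {μ : YoungDiagram} {n : ℕ} (h : μ.card = n) :
    aboveF μ = (S (n + 1)).filter (fun lam => CoversBelow μ lam) := by
  ext lam
  rw [mem_aboveF, Finset.mem_filter, mem_S]
  exact ⟨fun hc => ⟨by have := hc.2; omega, hc⟩, fun hc => hc.2⟩


lemma eq_bot_of_card_eq_zero {μ : YoungDiagram} (h : μ.card = 0) : μ = ⊥ := by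
  by_contra hne
  have := card_pos_iff_ne_bot.1 hne
  omega

lemma card_bot : (⊥ : YoungDiagram).card = 0 := rfl

lemma belowF_bot_singleton {ν : YoungDiagram} (h : ν.card = 1) : belowF ν = {⊥} := by
  ext μ
  rw [mem_belowF, Finset.mem_singleton]
  constructor
  · rintro ⟨hle, hc⟩
    exact eq_bot_of_card_eq_zero (by omega)
  · rintro rfl
    exact ⟨bot_le, by rw [card_bot, h]⟩

lemma upSum {d : YoungDiagram → ℕ} (hd : CountsSYT d) :
    ∀ n, ∀ ρ : YoungDiagram, ρ.card = n → ∑ ν ∈ aboveF ρ, d ν = (n + 1) * d ρ := by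
  intro n
  induction n with
  | zero =>
    intro ρ hρ
    have hb : ρ = ⊥ := eq_bot_of_card_eq_zero hρ
    subst hb
    have h1 : ∀ ν ∈ aboveF (⊥ : YoungDiagram), d ν = 1 := by
      intro ν hν
      have hc := mem_aboveF.1 hν
      have hν1 : ν.card = 1 := by have := hc.2; rw [card_bot] at this; omega
      have hνne : ν ≠ ⊥ := card_pos_iff_ne_bot.2 (by omega)
      rw [rec_finset hd hνne, belowF_bot_singleton hν1, Finset.sum_singleton, hd.1]
    rw [Finset.sum_congr rfl h1, Finset.sum_const, smul_eq_mul, mul_one]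
    have h2 : (belowF (⊥ : YoungDiagram)).card = 0 := by
      rw [Finset.card_eq_zero, Finset.eq_empty_iff_forall_notMem]
      intro μ hμ
      have := (mem_belowF.1 hμ).2
      rw [card_bot] at this
      omega
    have h3 := card_above_below (⊥ : YoungDiagram)
    rw [hd.1]
    omega
  | succ n ih =>
    intro ρ hρ
    have hρne : ρ ≠ ⊥ := card_pos_iff_ne_bot.2 (by omega)
    have hρS : ρ ∈ S (n + 1) := mem_S.2 hρ
    have hstep1 : ∑ ν ∈ aboveF ρ, d ν
        = ∑ ν ∈ aboveF ρ, ∑ σ ∈ S (n + 1), if CoversBelow σ ν then d σ else 0 := by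
      refine Finset.sum_congr rfl fun ν hν => ?_
      have hc := mem_aboveF.1 hν
      have hν2 : ν.card = (n + 1) + 1 := by have := hc.2; omega
      have hνne : ν ≠ ⊥ := card_pos_iff_ne_bot.2 (by omega)
      rw [rec_finset hd hνne, belowF_filter hν2, Finset.sum_filter]
    have hstep2 : ∑ ν ∈ aboveF ρ, ∑ σ ∈ S (n + 1), (if CoversBelow σ ν then d σ else 0)
        = ∑ σ ∈ S (n + 1), (aboveF ρ ∩ aboveF σ).card * d σ := by
      rw [Finset.sum_comm]
      refine Finset.sum_congr rfl fun σ hσ => ?_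
      have hfe : (aboveF ρ).filter (fun ν => CoversBelow σ ν) = aboveF ρ ∩ aboveF σ := by
        ext ν
        rw [Finset.mem_filter, Finset.mem_inter, mem_aboveF, mem_aboveF]
      rw [← Finset.sum_filter, hfe, Finset.sum_const, smul_eq_mul]
    have hstep3 : ∑ σ ∈ S (n + 1), (aboveF ρ ∩ aboveF σ).card * d σ
        = (∑ σ ∈ S (n + 1), (belowF ρ ∩ belowF σ).card * d σ) + d ρ := by
      rw [← Finset.add_sum_erase _ _ hρS, ← Finset.add_sum_erase _ _ hρS]
      have hdiag : (aboveF ρ ∩ aboveF ρ).card * d ρ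
          = ((belowF ρ ∩ belowF ρ).card * d ρ) + d ρ := by
        rw [Finset.inter_self, Finset.inter_self, card_above_below]
        ring
      have hoff : ∑ σ ∈ (S (n + 1)).erase ρ, (aboveF ρ ∩ aboveF σ).card * d σ
          = ∑ σ ∈ (S (n + 1)).erase ρ, (belowF ρ ∩ belowF σ).card * d σ := by
        refine Finset.sum_congr rfl fun σ hσ => ?_
        obtain ⟨hσne, hσS⟩ := Finset.mem_erase.1 hσ
        rw [diamond (by rw [hρ, mem_S.1 hσS]) (fun he => hσne he.symm)]
      rw [hdiag, hoff]
      ring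
    have hper : ∀ σ : YoungDiagram, (belowF ρ ∩ belowF σ).card * d σ
        = ∑ τ ∈ belowF ρ, if CoversBelow τ σ then d σ else 0 := by
      intro σ
      have hfe : (belowF ρ).filter (fun τ => CoversBelow τ σ) = belowF ρ ∩ belowF σ := by
        ext τ
        rw [Finset.mem_filter, Finset.mem_inter, mem_belowF, mem_belowF]
      rw [← Finset.sum_filter, hfe, Finset.sum_const, smul_eq_mul]
    have hstep4 : ∑ σ ∈ S (n + 1), (belowF ρ ∩ belowF σ).card * d σ
        = ∑ τ ∈ belowF ρ, ∑ σ ∈ S (n + 1), if CoversBelow τ σ then d σ else 0 := by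
      rw [Finset.sum_congr rfl fun σ _ => hper σ, Finset.sum_comm]
    have hstep5 : ∑ τ ∈ belowF ρ, (∑ σ ∈ S (n + 1), if CoversBelow τ σ then d σ else 0)
        = (n + 1) * d ρ := by
      have hinner : ∀ τ ∈ belowF ρ, (∑ σ ∈ S (n + 1), if CoversBelow τ σ then d σ else 0)
          = (n + 1) * d τ := by
        intro τ hτ
        have hcc := mem_belowF.1 hτ
        have hτc : τ.card = n := by have := hcc.2; omega
        rw [← Finset.sum_filter, ← aboveF_filter hτc]
        exact ih τ hτc
      rw [Finset.sum_congr rfl hinner, ← Finset.mul_sum, ← rec_finset hd hρne]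
    rw [hstep1, hstep2, hstep3, hstep4, hstep5]
    ring

lemma sq_sum {d : YoungDiagram → ℕ} (hd : CountsSYT d) :
    ∀ n : ℕ, ∑ lam ∈ S n, d lam ^ 2 = n.factorial := by
  intro n
  induction n with
  | zero =>
    have hS : S 0 = {⊥} := by
      ext lam
      rw [mem_S, Finset.mem_singleton]
      exact ⟨eq_bot_of_card_eq_zero, fun h => h ▸ card_bot⟩
    rw [hS, Finset.sum_singleton, hd.1]
    rfl
  | succ n ih =>
    have h1 : ∑ lam ∈ S (n + 1), d lam ^ 2
        = ∑ lam ∈ S (n + 1), ∑ μ ∈ S n, if CoversBelow μ lam then d lam * d μ else 0 := by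
      refine Finset.sum_congr rfl fun lam hlam => ?_
      have hlamc : lam.card = n + 1 := mem_S.1 hlam
      have hne : lam ≠ ⊥ := card_pos_iff_ne_bot.2 (by omega)
      rw [pow_two]
      nth_rewrite 2 [rec_finset hd hne]
      rw [Finset.mul_sum, belowF_filter hlamc, Finset.sum_filter]
    have h2 : ∑ lam ∈ S (n + 1), ∑ μ ∈ S n, (if CoversBelow μ lam then d lam * d μ else 0)
        = ∑ μ ∈ S n, (n + 1) * d μ ^ 2 := by
      rw [Finset.sum_comm]
      refine Finset.sum_congr rfl fun μ hμ => ?_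
      have hμc : μ.card = n := mem_S.1 hμ
      rw [← Finset.sum_filter, ← aboveF_filter hμc, ← Finset.sum_mul, upSum hd n μ hμc, pow_two]
      ring
    rw [h1, h2, ← Finset.mul_sum, ih, Nat.factorial_succ]

end SYTAux

theorem sum_sq_dim_eq_factorial (d : YoungDiagram → ℕ) (hd : CountsSYT d)
    (n : ℕ) :
    {lam : YoungDiagram | lam.card = n}.Finite ∧
      ∑ᶠ lam ∈ {lam : YoungDiagram | lam.card = n}, (d lam) ^ 2 = n.factorial := by
  refine ⟨SYTAux.finite_card_eq n, ?_⟩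
  rw [← Set.Finite.coe_toFinset (SYTAux.finite_card_eq n), finsum_mem_coe_finset]
  exact SYTAux.sq_sum hd n
end

section
/- Let d : YoungDiagram → ℕ count standard Young tableaux. There exists a probability measure Pl on the path space Ω of the Young graph such that for every n : ℕ and every finite path s of length n ending at the diagram λ = s n, the measure of the cylinder Cyl s equals (d λ : ℝ≥0∞) / n!. (This measure is the Plancherel measure of the infinite symmetric group.) -/
open scoped ENNReal

/-- Discrete measurable structure on Young diagrams. -/
instance : MeasurableSpace YoungDiagram := ⊤

/-- A path in the Young graph: an infinite sequence of diagrams starting at `⊥`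
in which each diagram is covered by the next one. -/
def IsYoungPath (T : ℕ → YoungDiagram) : Prop :=
  T 0 = ⊥ ∧ ∀ k : ℕ, CoversBelow (T k) (T (k + 1))

/-- The path space of the Young graph (the space of infinite Young tableaux),
with the σ-algebra induced from the product σ-algebra on `ℕ → YoungDiagram`. -/
abbrev YoungPathSpace : Type := {T : ℕ → YoungDiagram // IsYoungPath T}

/-- A finite path of length `n` in the Young graph. -/
def IsFinPath {n : ℕ} (s : Fin (n + 1) → YoungDiagram) : Prop :=
  s 0 = ⊥ ∧ ∀ k : Fin n, CoversBelow (s k.castSucc) (s k.succ)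

/-- The cylinder set of a finite path. -/
def Cyl {n : ℕ} (s : Fin (n + 1) → YoungDiagram) : Set YoungPathSpace :=
  {T : YoungPathSpace | ∀ k : Fin (n + 1), T.1 (k : ℕ) = s k}


namespace PlancherelAux

open Finset YoungDiagram

/-- `i` is a row where a cell can be added. -/
def Addable (μ : YoungDiagram) : ℕ → Prop
  | 0 => True
  | (i+1) => μ.rowLen (i+1) < μ.rowLen i

instance (μ : YoungDiagram) (i : ℕ) : Decidable (Addable μ i) := by
  cases i with
  | zero => exact .isTrue trivial
  | succ i => exact inferInstanceAs (Decidable (_ < _))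

/-- `i` is a row whose last cell can be removed. -/
def Removable (μ : YoungDiagram) (i : ℕ) : Prop := μ.rowLen (i+1) < μ.rowLen i

instance (μ : YoungDiagram) (i : ℕ) : Decidable (Removable μ i) :=
  inferInstanceAs (Decidable (_ < _))

lemma addable_zero (μ : YoungDiagram) : Addable μ 0 := trivial

lemma isLowerSet_addCell {μ : YoungDiagram} {i : ℕ} (h : Addable μ i) :
    IsLowerSet (↑(insert (i, μ.rowLen i) μ.cells) : Set (ℕ × ℕ)) := by
  intro ⟨c, e⟩ ⟨a, b⟩ hle hm
  simp only [Finset.coe_insert, Set.mem_insert_iff, Finset.mem_coe, mem_cells] at hm ⊢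
  obtain ⟨h1, h2⟩ : a ≤ c ∧ b ≤ e := Prod.mk_le_mk.mp hle
  rcases hm with hm | hm
  · -- (c, e) = (i, rowLen i)
    obtain ⟨rfl, rfl⟩ : c = i ∧ e = μ.rowLen i := by
      exact ⟨congrArg Prod.fst hm, congrArg Prod.snd hm⟩
    rcases lt_or_eq_of_le h2 with hb | rfl
    · right
      rw [mem_iff_lt_rowLen]
      exact lt_of_lt_of_le hb (μ.rowLen_anti a c h1)
    · rcases lt_or_eq_of_le h1 with ha | rfl
      · right
        rw [mem_iff_lt_rowLen]
        obtain ⟨j, rfl⟩ : ∃ j, c = j + 1 := ⟨c - 1, by omega⟩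
        have : μ.rowLen (j+1) < μ.rowLen j := h
        calc μ.rowLen (j+1) < μ.rowLen j := this
        _ ≤ μ.rowLen a := by
          exact μ.rowLen_anti a j (by omega)
      · left; rfl
  · right
    exact μ.up_left_mem h1 h2 hm

/-- Add a cell at the end of row `i` (junk value `μ` if not addable). -/
def addCell (μ : YoungDiagram) (i : ℕ) : YoungDiagram :=
  if h : Addable μ i then ⟨insert (i, μ.rowLen i) μ.cells, isLowerSet_addCell h⟩ else μ

lemma cells_addCell {μ : YoungDiagram} {i : ℕ} (h : Addable μ i) :
    (addCell μ i).cells = insert (i, μ.rowLen i) μ.cells := by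
  rw [addCell, dif_pos h]

lemma corner_not_mem (μ : YoungDiagram) (i : ℕ) : (i, μ.rowLen i) ∉ μ := by
  rw [mem_iff_lt_rowLen]; omega

lemma mem_addCell {μ : YoungDiagram} {i : ℕ} (h : Addable μ i) {c : ℕ × ℕ} :
    c ∈ addCell μ i ↔ c = (i, μ.rowLen i) ∨ c ∈ μ := by
  rw [← mem_cells, cells_addCell h, Finset.mem_insert, mem_cells]

lemma card_addCell {μ : YoungDiagram} {i : ℕ} (h : Addable μ i) :
    (addCell μ i).card = μ.card + 1 := by
  rw [YoungDiagram.card, cells_addCell h, Finset.card_insert_of_notMem (by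
    rw [mem_cells]; exact corner_not_mem μ i)]

lemma le_addCell (μ : YoungDiagram) (i : ℕ) : μ ≤ addCell μ i := by
  by_cases h : Addable μ i
  · refine cells_subset_iff.mp ?_
    rw [cells_addCell h]
    exact Finset.subset_insert _ _
  · rw [addCell, dif_neg h]

lemma coversBelow_addCell {μ : YoungDiagram} {i : ℕ} (h : Addable μ i) :
    CoversBelow μ (addCell μ i) :=
  ⟨le_addCell μ i, (card_addCell h).symm⟩

lemma rowLen_addCell {μ : YoungDiagram} {i : ℕ} (h : Addable μ i) (a : ℕ) :
    (addCell μ i).rowLen a = if a = i then μ.rowLen i + 1 else μ.rowLen a := by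
  split_ifs with ha
  · subst ha
    have h1 : (a, μ.rowLen a) ∈ addCell μ a := (mem_addCell h).mpr (Or.inl rfl)
    have h2 : (a, μ.rowLen a + 1) ∉ addCell μ a := by
      rw [mem_addCell h]
      push_neg
      constructor
      · simp
      · rw [mem_iff_lt_rowLen]; omega
    rw [mem_iff_lt_rowLen] at h1 h2
    omega
  · have : ∀ b, (a, b) ∈ addCell μ i ↔ (a, b) ∈ μ := by
      intro b
      rw [mem_addCell h]
      simp only [Prod.mk.injEq]
      tauto
    have h1 := this (μ.rowLen a)
    have h2 : ∀ b, b < μ.rowLen a → (a, b) ∈ addCell μ i := by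
      intro b hb
      exact (this b).mpr (mem_iff_lt_rowLen.mpr hb)
    rw [mem_iff_lt_rowLen, mem_iff_lt_rowLen (μ := μ)] at h1
    rcases Nat.lt_trichotomy ((addCell μ i).rowLen a) (μ.rowLen a) with hl | hl | hl
    · have := (h2 _ hl)
      rw [mem_iff_lt_rowLen] at this
      omega
    · exact hl
    · omega

/-- Characterization of the covering relation: `lam` covers `μ` iff `lam` is obtained
from `μ` by adding a cell at some addable row. -/
lemma coversBelow_iff {μ lam : YoungDiagram} :
    CoversBelow μ lam ↔ ∃ i, Addable μ i ∧ lam = addCell μ i := by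
  constructor
  · rintro ⟨hle, hcard⟩
    have hsub : μ.cells ⊆ lam.cells := cells_subset_iff.mpr hle
    have hcard' : μ.cells.card + 1 = lam.cells.card := hcard
    have hcd : (lam.cells \ μ.cells).card = 1 := by
      rw [Finset.card_sdiff_of_subset hsub]; omega
    obtain ⟨c, hc⟩ := Finset.card_eq_one.mp hcd
    obtain ⟨i, j⟩ := c
    have hmem : (i, j) ∈ lam ∧ (i, j) ∉ μ := by
      have : (i, j) ∈ lam.cells \ μ.cells := hc ▸ Finset.mem_singleton_self _
      rw [Finset.mem_sdiff, mem_cells, mem_cells] at this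
      exact this
    have hdiff : ∀ c', c' ∈ lam → c' ∉ μ → c' = (i, j) := by
      intro c' h1 h2
      have : c' ∈ lam.cells \ μ.cells := Finset.mem_sdiff.mpr ⟨mem_cells _ |>.mp h1, by
        rw [mem_cells]; exact h2⟩
      rw [hc, Finset.mem_singleton] at this
      exact this
    -- j = μ.rowLen i
    have hj : j = μ.rowLen i := by
      have h1 : μ.rowLen i ≤ j := by
        have := hmem.2
        rw [mem_iff_lt_rowLen] at this
        omega
      have h2 : j ≤ μ.rowLen i := by
        rcases Nat.eq_zero_or_pos j with rfl | hj
        · omega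
        · have hm : (i, j - 1) ∈ lam := lam.up_left_mem le_rfl (by omega) hmem.1
          have : (i, j-1) ∈ μ := by
            by_contra hcon
            have := hdiff _ hm hcon
            simp only [Prod.mk.injEq] at this
            omega
          rw [mem_iff_lt_rowLen] at this
          omega
      omega
    subst hj
    have hadd : Addable μ i := by
      cases i with
      | zero => trivial
      | succ k =>
        show μ.rowLen (k+1) < μ.rowLen k
        have hm : (k, μ.rowLen (k+1)) ∈ lam := lam.up_left_mem (by omega) le_rfl hmem.1
        have : (k, μ.rowLen (k+1)) ∈ μ := by
          by_contra hcon
          have := hdiff _ hm hcon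
          simp only [Prod.mk.injEq] at this
          omega
        rw [mem_iff_lt_rowLen] at this
        exact this
    refine ⟨i, hadd, ?_⟩
    ext ⟨a, b⟩
    rw [mem_cells, mem_cells, mem_addCell hadd]
    constructor
    · intro hm
      by_cases h2 : (a, b) ∈ μ
      · exact Or.inr h2
      · exact Or.inl (hdiff _ hm h2)
    · rintro (h2 | h2)
      · rw [h2]; exact hmem.1
      · exact hle h2
  · rintro ⟨i, h, rfl⟩
    exact coversBelow_addCell h

lemma isLowerSet_delCell {μ : YoungDiagram} {i : ℕ} (h : Removable μ i) :
    IsLowerSet (↑(μ.cells.erase (i, μ.rowLen i - 1)) : Set (ℕ × ℕ)) := by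
  have hpos : 0 < μ.rowLen i := by have h' : μ.rowLen (i+1) < μ.rowLen i := h; omega
  intro ⟨c, e⟩ ⟨a, b⟩ hle hm
  obtain ⟨h1, h2⟩ : a ≤ c ∧ b ≤ e := Prod.mk_le_mk.mp hle
  simp only [Finset.coe_erase, Set.mem_diff, Finset.mem_coe, mem_cells,
    Set.mem_singleton_iff, Prod.mk.injEq, not_and] at hm ⊢
  obtain ⟨hmem, hne⟩ := hm
  refine ⟨μ.up_left_mem h1 h2 hmem, ?_⟩
  intro ha hb
  have hce : e < μ.rowLen c := mem_iff_lt_rowLen.mp hmem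
  rcases Nat.lt_or_ge i c with hc | hc
  · have h3 : μ.rowLen c ≤ μ.rowLen (i+1) := μ.rowLen_anti _ _ hc
    have h4 : μ.rowLen (i+1) < μ.rowLen i := h
    omega
  · have hci : c = i := by omega
    rw [hci] at hce
    exact hne hci (by omega)

/-- Remove the last cell of row `i` (junk value `μ` if not removable). -/
def delCell (μ : YoungDiagram) (i : ℕ) : YoungDiagram :=
  if h : Removable μ i then ⟨μ.cells.erase (i, μ.rowLen i - 1), isLowerSet_delCell h⟩ else μ

lemma cells_delCell {μ : YoungDiagram} {i : ℕ} (h : Removable μ i) :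
    (delCell μ i).cells = μ.cells.erase (i, μ.rowLen i - 1) := by
  rw [delCell, dif_pos h]

lemma mem_delCell {μ : YoungDiagram} {i : ℕ} (h : Removable μ i) {c : ℕ × ℕ} :
    c ∈ delCell μ i ↔ c ≠ (i, μ.rowLen i - 1) ∧ c ∈ μ := by
  rw [← mem_cells, cells_delCell h, Finset.mem_erase, mem_cells]

lemma rowLen_delCell {μ : YoungDiagram} {i : ℕ} (h : Removable μ i) (a : ℕ) :
    (delCell μ i).rowLen a = if a = i then μ.rowLen i - 1 else μ.rowLen a := by
  have hpos : 0 < μ.rowLen i := by have h' : μ.rowLen (i+1) < μ.rowLen i := h; omega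
  have key : ∀ b, (a, b) ∈ delCell μ i ↔ b < (if a = i then μ.rowLen i - 1 else μ.rowLen a) := by
    intro b
    rw [mem_delCell h]
    split_ifs with ha
    · subst ha
      rw [mem_iff_lt_rowLen]
      simp only [Ne, Prod.mk.injEq, true_and]
      omega
    · rw [mem_iff_lt_rowLen]
      simp only [Ne, Prod.mk.injEq]
      constructor
      · exact fun h => h.2
      · exact fun h => ⟨fun hc => absurd hc.1 ha, h⟩
  have h1 := key ((delCell μ i).rowLen a)
  rw [mem_iff_lt_rowLen] at h1
  have h2 : ∀ b, b < (if a = i then μ.rowLen i - 1 else μ.rowLen a) →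
      b < (delCell μ i).rowLen a := by
    intro b hb
    rw [← mem_iff_lt_rowLen]
    exact (key b).mpr hb
  set X := (delCell μ i).rowLen a with hX
  set Y := (if a = i then μ.rowLen i - 1 else μ.rowLen a) with hY
  clear h1 h2
  rcases Nat.lt_trichotomy X Y with hl | hl | hl
  · exfalso
    have hmem : (a, X) ∈ delCell μ i := (key X).mpr hl
    rw [mem_iff_lt_rowLen, ← hX] at hmem
    omega
  · exact hl
  · exfalso
    have hXpos : 0 < X := by omega
    have hmem : (a, X - 1) ∈ delCell μ i := by
      rw [mem_iff_lt_rowLen, ← hX]; omega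
    have := (key (X - 1)).mp hmem
    omega

lemma delCell_addCell {μ : YoungDiagram} {i : ℕ} (h : Addable μ i) :
    delCell (addCell μ i) i = μ := by
  have hrem : Removable (addCell μ i) i := by
    show (addCell μ i).rowLen (i+1) < (addCell μ i).rowLen i
    rw [rowLen_addCell h, rowLen_addCell h, if_neg (by omega), if_pos rfl]
    have : μ.rowLen (i+1) ≤ μ.rowLen i := μ.rowLen_anti i (i+1) (by omega)
    omega
  ext c
  rw [mem_cells, mem_cells, mem_delCell hrem, mem_addCell h]
  have hcorner : (addCell μ i).rowLen i - 1 = μ.rowLen i := by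
    rw [rowLen_addCell h, if_pos rfl]
    omega
  rw [hcorner]

  constructor
  · rintro ⟨hne, (rfl | hm)⟩
    · exact absurd rfl hne
    · exact hm
  · intro hm
    refine ⟨?_, Or.inr hm⟩
    rintro rfl
    exact corner_not_mem μ i hm

lemma addCell_delCell {μ : YoungDiagram} {i : ℕ} (h : Removable μ i) :
    addCell (delCell μ i) i = μ := by
  have hpos : 0 < μ.rowLen i := by have h' : μ.rowLen (i+1) < μ.rowLen i := h; omega
  have hadd : Addable (delCell μ i) i := by
    cases i with
    | zero => trivial
    | succ k =>
      show (delCell μ (k+1)).rowLen (k+1) < (delCell μ (k+1)).rowLen k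
      rw [rowLen_delCell h, rowLen_delCell h, if_pos rfl, if_neg (by omega)]
      have h2 : μ.rowLen (k+1) ≤ μ.rowLen k := μ.rowLen_anti k (k+1) (by omega)
      omega
  ext c
  rw [mem_cells, mem_cells, mem_addCell hadd, mem_delCell h]
  have hcorner : (delCell μ i).rowLen i = μ.rowLen i - 1 := by
    rw [rowLen_delCell h, if_pos rfl]
  rw [hcorner]
  constructor
  · rintro (rfl | hm)
    · rw [mem_iff_lt_rowLen]; omega
    · exact hm.2
  · intro hm
    by_cases hc : c = (i, μ.rowLen i - 1)
    · exact Or.inl hc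
    · exact Or.inr ⟨hc, hm⟩

lemma removable_iff_exists {μ lam : YoungDiagram} :
    CoversBelow μ lam ↔ ∃ i, Removable lam i ∧ μ = delCell lam i := by
  rw [coversBelow_iff]
  constructor
  · rintro ⟨i, h, rfl⟩
    refine ⟨i, ?_, (delCell_addCell h).symm⟩
    show (addCell μ i).rowLen (i+1) < (addCell μ i).rowLen i
    rw [rowLen_addCell h, rowLen_addCell h, if_neg (by omega), if_pos rfl]
    have : μ.rowLen (i+1) ≤ μ.rowLen i := μ.rowLen_anti i (i+1) (by omega)
    omega
  · rintro ⟨i, h, rfl⟩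
    have hpos : 0 < lam.rowLen i := by have h' : lam.rowLen (i+1) < lam.rowLen i := h; omega
    have hadd : Addable (delCell lam i) i := by
      cases i with
      | zero => trivial
      | succ k =>
        show (delCell lam (k+1)).rowLen (k+1) < (delCell lam (k+1)).rowLen k
        rw [rowLen_delCell h, rowLen_delCell h, if_pos rfl, if_neg (by omega)]
        have h2 : lam.rowLen (k+1) ≤ lam.rowLen k := lam.rowLen_anti k (k+1) (by omega)
        omega
    exact ⟨i, hadd, (addCell_delCell h).symm⟩

end PlancherelAux

namespace PlancherelAux

open Finset YoungDiagram

instance : DecidableEq YoungDiagram := fun μ ν =>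
  decidable_of_iff (μ.cells = ν.cells) (by
    constructor
    · intro h
      ext c
      rw [h]
    · intro h
      rw [h])

def CountsSYT' (d : YoungDiagram → ℕ) : Prop :=
  d ⊥ = 1 ∧ ∀ lam : YoungDiagram, lam ≠ ⊥ →
    d lam = ∑ᶠ μ ∈ {μ : YoungDiagram | CoversBelow μ lam}, d μ

/-- The set of diagrams covering `μ`. -/
noncomputable def UP (μ : YoungDiagram) : Finset YoungDiagram :=
  ((Finset.range (μ.colLen 0 + 1)).filter (fun i => Addable μ i)).image (addCell μ)

/-- The set of diagrams covered by `μ`. -/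
noncomputable def DOWN (μ : YoungDiagram) : Finset YoungDiagram :=
  ((Finset.range (μ.colLen 0)).filter (fun i => Removable μ i)).image (delCell μ)

lemma rowLen_pos_iff {μ : YoungDiagram} {i : ℕ} : 0 < μ.rowLen i ↔ i < μ.colLen 0 := by
  rw [← mem_iff_lt_colLen, mem_iff_lt_rowLen]

lemma addable_le {μ : YoungDiagram} {i : ℕ} (h : Addable μ i) : i ≤ μ.colLen 0 := by
  cases i with
  | zero => omega
  | succ k =>
    have h' : μ.rowLen (k+1) < μ.rowLen k := h
    have : k < μ.colLen 0 := rowLen_pos_iff.mp (by omega)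
    omega

lemma removable_lt {μ : YoungDiagram} {i : ℕ} (h : Removable μ i) : i < μ.colLen 0 := by
  have h' : μ.rowLen (i+1) < μ.rowLen i := h
  exact rowLen_pos_iff.mp (by omega)

lemma mem_UP {μ lam : YoungDiagram} : lam ∈ UP μ ↔ CoversBelow μ lam := by
  rw [UP, Finset.mem_image, coversBelow_iff]
  constructor
  · rintro ⟨i, hi, rfl⟩
    rw [Finset.mem_filter] at hi
    exact ⟨i, hi.2, rfl⟩
  · rintro ⟨i, hi, rfl⟩
    exact ⟨i, Finset.mem_filter.mpr ⟨Finset.mem_range.mpr (by have := addable_le hi; omega), hi⟩,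
      rfl⟩

lemma mem_DOWN {μ ρ : YoungDiagram} : ρ ∈ DOWN μ ↔ CoversBelow ρ μ := by
  rw [DOWN, Finset.mem_image, removable_iff_exists]
  constructor
  · rintro ⟨i, hi, rfl⟩
    rw [Finset.mem_filter] at hi
    exact ⟨i, hi.2, rfl⟩
  · rintro ⟨i, hi, rfl⟩
    exact ⟨i, Finset.mem_filter.mpr ⟨Finset.mem_range.mpr (removable_lt hi), hi⟩, rfl⟩

lemma card_UP (μ : YoungDiagram) :
    (UP μ).card = ((Finset.range (μ.colLen 0 + 1)).filter (fun i => Addable μ i)).card := by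
  rw [UP, Finset.card_image_of_injOn]
  intro i hi j hj hij
  rw [Finset.coe_filter] at hi hj
  by_contra hne
  have h1 := rowLen_addCell hi.2 i
  have h2 := rowLen_addCell hj.2 i
  rw [if_pos rfl] at h1
  rw [if_neg hne] at h2
  rw [hij] at h1
  omega

lemma card_DOWN (μ : YoungDiagram) :
    (DOWN μ).card = ((Finset.range (μ.colLen 0)).filter (fun i => Removable μ i)).card := by
  rw [DOWN, Finset.card_image_of_injOn]
  intro i hi j hj hij
  rw [Finset.coe_filter] at hi hj
  by_contra hne
  have hpos : 0 < μ.rowLen i := by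
    have h' : μ.rowLen (i+1) < μ.rowLen i := hi.2; omega
  have h1 := rowLen_delCell hi.2 i
  have h2 := rowLen_delCell hj.2 i
  rw [if_pos rfl] at h1
  rw [if_neg hne] at h2
  rw [hij] at h1
  omega

lemma card_UP_eq (μ : YoungDiagram) : (UP μ).card = (DOWN μ).card + 1 := by
  rw [card_UP, card_DOWN]
  have hset : (Finset.range (μ.colLen 0 + 1)).filter (fun i => Addable μ i)
      = insert 0 (((Finset.range (μ.colLen 0)).filter (fun i => Removable μ i)).image (· + 1)) := by
    ext i
    simp only [Finset.mem_filter, Finset.mem_range, Finset.mem_insert, Finset.mem_image]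
    cases i with
    | zero => simp [Addable]
    | succ k =>
      constructor
      · rintro ⟨hk, hA⟩
        have h' : μ.rowLen (k+1) < μ.rowLen k := hA
        exact Or.inr ⟨k, ⟨⟨removable_lt h', h'⟩, rfl⟩⟩
      · rintro (h | ⟨j, ⟨⟨hj1, hj2⟩, hj3⟩⟩)
        · omega
        · obtain rfl : j = k := by omega
          exact ⟨by omega, hj2⟩
  rw [hset, Finset.card_insert_of_notMem (by simp), Finset.card_image_of_injective _
    (fun a b h => by omega)]

lemma eq_of_le_of_card_le {μ ν : YoungDiagram} (h : μ ≤ ν) (hc : ν.card ≤ μ.card) : μ = ν := by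
  ext c
  have := Finset.eq_of_subset_of_card_le (cells_subset_iff.mpr h) hc
  rw [this]

lemma card_bot : (⊥ : YoungDiagram).card = 0 := by
  rw [YoungDiagram.card, cells_bot, Finset.card_empty]

lemma eq_bot_of_card_eq_zero {μ : YoungDiagram} (h : μ.card = 0) : μ = ⊥ :=
  (eq_of_le_of_card_le bot_le (by rw [card_bot]; omega)).symm

lemma ne_bot_of_card_pos {μ : YoungDiagram} (h : 0 < μ.card) : μ ≠ ⊥ := by
  intro hc
  rw [hc, card_bot] at h
  omega

lemma common_upper {lam μ Λ : YoungDiagram} (h1 : CoversBelow lam Λ) (h2 : CoversBelow μ Λ)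
    (hne : μ ≠ lam) :
    Λ = lam ⊔ μ ∧ CoversBelow (lam ⊓ μ) lam ∧ CoversBelow (lam ⊓ μ) μ := by
  obtain ⟨hle1, hc1⟩ := h1
  obtain ⟨hle2, hc2⟩ := h2
  have hcards : μ.card = lam.card := by omega
  have hsup_le : lam ⊔ μ ≤ Λ := sup_le hle1 hle2
  have hsup_card_le : (lam ⊔ μ).card ≤ Λ.card := Finset.card_le_card (cells_subset_iff.mpr hsup_le)
  have hlam_ne_sup : lam ≠ lam ⊔ μ := by
    intro hcon
    have hμle : μ ≤ lam := by rw [hcon]; exact le_sup_right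
    exact hne (eq_of_le_of_card_le hμle (by omega))
  have hlt : lam.card < (lam ⊔ μ).card := by
    have hsub : lam.cells ⊂ (lam ⊔ μ).cells := by
      refine ⟨cells_subset_iff.mpr le_sup_left, ?_⟩
      intro hcon
      exact hlam_ne_sup (eq_of_le_of_card_le le_sup_left (Finset.card_le_card hcon))
    exact Finset.card_lt_card hsub
  have hsup_card : (lam ⊔ μ).card = Λ.card := by omega
  have hΛ : Λ = lam ⊔ μ := (eq_of_le_of_card_le hsup_le (by omega)).symm
  have hie : (lam ⊔ μ).card + (lam ⊓ μ).card = lam.card + μ.card := by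
    rw [YoungDiagram.card, YoungDiagram.card, YoungDiagram.card, YoungDiagram.card,
      cells_sup, cells_inf]
    exact Finset.card_union_add_card_inter _ _
  exact ⟨hΛ, ⟨inf_le_left, by omega⟩, ⟨inf_le_right, by omega⟩⟩

lemma common_lower {lam μ ρ : YoungDiagram} (h1 : CoversBelow ρ lam) (h2 : CoversBelow ρ μ)
    (hne : μ ≠ lam) :
    ρ = lam ⊓ μ ∧ CoversBelow lam (lam ⊔ μ) ∧ CoversBelow μ (lam ⊔ μ) := by
  obtain ⟨hle1, hc1⟩ := h1
  obtain ⟨hle2, hc2⟩ := h2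
  have hcards : μ.card = lam.card := by omega
  have hinf_le : ρ ≤ lam ⊓ μ := le_inf hle1 hle2
  have hinf_card_ge : ρ.card ≤ (lam ⊓ μ).card := Finset.card_le_card (cells_subset_iff.mpr hinf_le)
  have hinf_ne_lam : lam ⊓ μ ≠ lam := by
    intro hcon
    refine hne (eq_of_le_of_card_le ?_ (by omega)).symm
    rw [← hcon]
    exact inf_le_right
  have hlt : (lam ⊓ μ).card < lam.card := by
    have hsub : (lam ⊓ μ).cells ⊂ lam.cells := by
      refine ⟨cells_subset_iff.mpr inf_le_left, ?_⟩
      intro hcon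
      exact hinf_ne_lam (eq_of_le_of_card_le inf_le_left (Finset.card_le_card hcon))
    exact Finset.card_lt_card hsub
  have hinf_card : (lam ⊓ μ).card = ρ.card := by omega
  have hρ : ρ = lam ⊓ μ := eq_of_le_of_card_le hinf_le (by omega)
  have hie : (lam ⊔ μ).card + (lam ⊓ μ).card = lam.card + μ.card := by
    rw [YoungDiagram.card, YoungDiagram.card, YoungDiagram.card, YoungDiagram.card,
      cells_sup, cells_inf]
    exact Finset.card_union_add_card_inter _ _
  exact ⟨hρ, ⟨le_sup_left, by omega⟩, ⟨le_sup_right, by omega⟩⟩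

section key

variable {d : YoungDiagram → ℕ}

lemma d_spec (hd : CountsSYT' d) {lam : YoungDiagram} (h : lam ≠ ⊥) :
    d lam = ∑ μ ∈ DOWN lam, d μ := by
  rw [hd.2 lam h, show {μ | CoversBelow μ lam} = ↑(DOWN lam) by
    ext μ; simp [mem_DOWN], finsum_mem_coe_finset]

/-- The key identity: summing `d` over the covers of `lam` gives `(lam.card + 1) * d lam`. -/
lemma key (hd : CountsSYT' d) : ∀ n : ℕ, ∀ lam : YoungDiagram, lam.card = n →
    ∑ Λ ∈ UP lam, d Λ = (n + 1) * d lam := by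
  intro n
  induction n using Nat.strong_induction_on with
  | _ n IH =>
    intro lam hlam
    by_cases hbot : lam = ⊥
    · subst hbot
      rw [card_bot] at hlam
      subst hlam
      have hDOWN_bot : DOWN (⊥ : YoungDiagram) = ∅ := by
        ext ρ
        simp only [mem_DOWN, Finset.notMem_empty, iff_false]
        rintro ⟨-, hc⟩
        rw [card_bot] at hc
        omega
      have hone : ∀ Λ ∈ UP (⊥ : YoungDiagram), d Λ = 1 := by
        intro Λ hΛ
        have hc : CoversBelow ⊥ Λ := mem_UP.mp hΛ
        have hΛcard : Λ.card = 1 := by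
          have := hc.2
          rw [card_bot] at this
          omega
        have hDΛ : DOWN Λ = {⊥} := by
          ext ρ
          simp only [mem_DOWN, Finset.mem_singleton]
          constructor
          · rintro ⟨hle, hcc⟩
            exact eq_bot_of_card_eq_zero (by omega)
          · rintro rfl
            exact ⟨bot_le, by rw [card_bot]; omega⟩
        rw [d_spec hd (ne_bot_of_card_pos (by omega)), hDΛ, Finset.sum_singleton, hd.1]
      rw [Finset.sum_congr rfl hone, Finset.sum_const, smul_eq_mul, mul_one,
        card_UP_eq, hDOWN_bot, Finset.card_empty, hd.1]
    · -- general step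
      have hn : 0 < n := by
        rcases Nat.eq_zero_or_pos n with rfl | h
        · exact absurd (eq_bot_of_card_eq_zero hlam) hbot
        · exact h
      -- split each d Λ
      have hSplit : ∀ Λ ∈ UP lam, d Λ = d lam + ∑ μ ∈ (DOWN Λ).erase lam, d μ := by
        intro Λ hΛ
        have hc : CoversBelow lam Λ := mem_UP.mp hΛ
        have hΛne : Λ ≠ ⊥ := ne_bot_of_card_pos (by have := hc.2; omega)
        rw [d_spec hd hΛne, ← Finset.add_sum_erase _ _ (mem_DOWN.mpr hc)]
      have hS : ∑ Λ ∈ UP lam, d Λ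
          = (UP lam).card * d lam + ∑ Λ ∈ UP lam, ∑ μ ∈ (DOWN Λ).erase lam, d μ := by
        rw [Finset.sum_congr rfl hSplit, Finset.sum_add_distrib, Finset.sum_const, smul_eq_mul]
      -- the T sum
      have hT1 : ∑ ρ ∈ DOWN lam, ∑ μ ∈ UP ρ, d μ = n * d lam := by
        have : ∀ ρ ∈ DOWN lam, ∑ μ ∈ UP ρ, d μ = n * d ρ := by
          intro ρ hρ
          have hc : CoversBelow ρ lam := mem_DOWN.mp hρ
          have hρcard : ρ.card = n - 1 := by have := hc.2; omega
          have := IH (n - 1) (by omega) ρ hρcard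
          rw [this]
          congr 1
          omega
        rw [Finset.sum_congr rfl this, ← Finset.mul_sum, ← d_spec hd hbot]
      have hT2 : ∑ ρ ∈ DOWN lam, ∑ μ ∈ UP ρ, d μ
          = (DOWN lam).card * d lam + ∑ ρ ∈ DOWN lam, ∑ μ ∈ (UP ρ).erase lam, d μ := by
        have : ∀ ρ ∈ DOWN lam, ∑ μ ∈ UP ρ, d μ = d lam + ∑ μ ∈ (UP ρ).erase lam, d μ := by
          intro ρ hρ
          rw [← Finset.add_sum_erase _ _ (mem_UP.mpr (mem_DOWN.mp hρ))]
        rw [Finset.sum_congr rfl this, Finset.sum_add_distrib, Finset.sum_const, smul_eq_mul]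
      -- X = Y via bijection
      have hXY : ∑ Λ ∈ UP lam, ∑ μ ∈ (DOWN Λ).erase lam, d μ
          = ∑ ρ ∈ DOWN lam, ∑ μ ∈ (UP ρ).erase lam, d μ := by
        rw [← Finset.sum_sigma ((UP lam)) (fun Λ => (DOWN Λ).erase lam) (fun p => d p.2),
          ← Finset.sum_sigma ((DOWN lam)) (fun ρ => (UP ρ).erase lam) (fun p => d p.2)]
        refine Finset.sum_bij' (fun p _ => ⟨lam ⊓ p.2, p.2⟩) (fun p _ => ⟨lam ⊔ p.2, p.2⟩)
          ?_ ?_ ?_ ?_ ?_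
        · rintro ⟨Λ, μ⟩ hp
          rw [Finset.mem_sigma] at hp
          obtain ⟨hΛ, hμ⟩ := hp
          rw [Finset.mem_erase] at hμ
          obtain ⟨hμne, hμΛ⟩ := hμ
          obtain ⟨-, hcl, hcm⟩ := common_upper (mem_UP.mp hΛ) (mem_DOWN.mp hμΛ) hμne
          rw [Finset.mem_sigma, Finset.mem_erase]
          exact ⟨mem_DOWN.mpr hcl, hμne, mem_UP.mpr hcm⟩
        · rintro ⟨ρ, μ⟩ hp
          rw [Finset.mem_sigma] at hp
          obtain ⟨hρ, hμ⟩ := hp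
          rw [Finset.mem_erase] at hμ
          obtain ⟨hμne, hμρ⟩ := hμ
          obtain ⟨-, hcl, hcm⟩ := common_lower (mem_DOWN.mp hρ) (mem_UP.mp hμρ) hμne
          rw [Finset.mem_sigma, Finset.mem_erase]
          exact ⟨mem_UP.mpr hcl, hμne, mem_DOWN.mpr hcm⟩
        · rintro ⟨Λ, μ⟩ hp
          rw [Finset.mem_sigma] at hp
          obtain ⟨hΛ, hμ⟩ := hp
          rw [Finset.mem_erase] at hμ
          obtain ⟨hΛeq, -, -⟩ := common_upper (mem_UP.mp hΛ) (mem_DOWN.mp hμ.2) hμ.1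
          exact congrArg (fun x => (⟨x, μ⟩ : Σ _ : YoungDiagram, YoungDiagram)) hΛeq.symm
        · rintro ⟨ρ, μ⟩ hp
          rw [Finset.mem_sigma] at hp
          obtain ⟨hρ, hμ⟩ := hp
          rw [Finset.mem_erase] at hμ
          obtain ⟨hρeq, -, -⟩ := common_lower (mem_DOWN.mp hρ) (mem_UP.mp hμ.2) hμ.1
          exact congrArg (fun x => (⟨x, μ⟩ : Σ _ : YoungDiagram, YoungDiagram)) hρeq.symm
        · rintro ⟨Λ, μ⟩ _
          rfl
      -- assemble
      have hcards : (UP lam).card = (DOWN lam).card + 1 := card_UP_eq lam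
      set a := d lam
      set cD := (DOWN lam).card
      set Y := ∑ ρ ∈ DOWN lam, ∑ μ ∈ (UP ρ).erase lam, d μ
      rw [hS, hXY, hcards]
      have hTY : cD * a + Y = n * a := by rw [← hT2, hT1]
      calc (cD + 1) * a + Y = (cD * a + Y) + a := by ring
      _ = n * a + a := by rw [hTY]
      _ = (n + 1) * a := by ring

end key

end PlancherelAux

namespace PlancherelAux

open Finset YoungDiagram

section dpos

variable {d : YoungDiagram → ℕ}

lemma eq_bot_of_colLen_zero {lam : YoungDiagram} (h : lam.colLen 0 = 0) : lam = ⊥ := by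
  ext ⟨i, j⟩
  simp only [cells_bot, Finset.notMem_empty, iff_false]
  intro hc
  have h0 : (0, 0) ∈ lam := lam.up_left_mem (Nat.zero_le _) (Nat.zero_le _) ((mem_cells _).mp hc)
  rw [mem_iff_lt_colLen] at h0
  omega

lemma down_nonempty {lam : YoungDiagram} (h : lam ≠ ⊥) : (DOWN lam).Nonempty := by
  have hcol : 0 < lam.colLen 0 := by
    by_contra hc
    exact h (eq_bot_of_colLen_zero (by omega))
  have hrem : Removable lam (lam.colLen 0 - 1) := by
    show lam.rowLen (lam.colLen 0 - 1 + 1) < lam.rowLen (lam.colLen 0 - 1)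
    have h1 : 0 < lam.rowLen (lam.colLen 0 - 1) := rowLen_pos_iff.mpr (by omega)
    have h2 : ¬ 0 < lam.rowLen (lam.colLen 0 - 1 + 1) := by
      rw [rowLen_pos_iff]
      omega
    omega
  exact ⟨delCell lam _, mem_DOWN.mpr (removable_iff_exists.mpr ⟨_, hrem, rfl⟩)⟩

lemma d_pos (hd : CountsSYT' d) : ∀ lam : YoungDiagram, 0 < d lam := by
  intro lam
  generalize hcard : lam.card = n
  induction n using Nat.strong_induction_on generalizing lam with
  | _ n IH =>
    by_cases hbot : lam = ⊥
    · subst hbot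
      rw [hd.1]
      omega
    · obtain ⟨ρ, hρ⟩ := down_nonempty hbot
      have hcc := (mem_DOWN.mp hρ).2
      have hρpos : 0 < d ρ := IH ρ.card (by omega) ρ rfl
      rw [d_spec hd hbot]
      exact lt_of_lt_of_le hρpos (Finset.single_le_sum (fun _ _ => Nat.zero_le _) hρ)

end dpos

/-- An injective encoding of Young diagrams into `ℕ`. -/
noncomputable def enc (μ : YoungDiagram) : ℕ := Encodable.encode μ.cells

lemma enc_injective : Function.Injective enc := by
  intro μ ν h
  have := Encodable.encode_injective (α := Finset (ℕ × ℕ)) h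
  ext c
  rw [this]

instance : Countable YoungDiagram := ⟨enc, enc_injective⟩

instance : MeasurableSingletonClass YoungDiagram := ⟨fun _ => trivial⟩

section slots

variable (w : YoungDiagram → ℕ)

/-- Total weight of slots (with respect to the `enc` ordering) strictly before `Λ`. -/
noncomputable def low (t : Finset YoungDiagram) (Λ : YoungDiagram) : ℕ :=
  ∑ Λ' ∈ t.filter (fun Λ' => enc Λ' < enc Λ), w Λ'

lemma slot_disjoint {t : Finset YoungDiagram} {Λ₁ Λ₂ : YoungDiagram} (h1 : Λ₁ ∈ t)
    (h : enc Λ₁ < enc Λ₂) : low w t Λ₁ + w Λ₁ ≤ low w t Λ₂ := by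
  have hsub : insert Λ₁ (t.filter (fun Λ' => enc Λ' < enc Λ₁))
      ⊆ t.filter (fun Λ' => enc Λ' < enc Λ₂) := by
    intro y hy
    rw [Finset.mem_insert] at hy
    rw [Finset.mem_filter]
    rcases hy with rfl | hy
    · exact ⟨h1, h⟩
    · rw [Finset.mem_filter] at hy
      exact ⟨hy.1, hy.2.trans h⟩
  have := Finset.sum_le_sum_of_subset (f := w) hsub
  rwa [Finset.sum_insert (by simp [Finset.mem_filter]), add_comm] at this

lemma slot_total {t : Finset YoungDiagram} {Λ : YoungDiagram} (h : Λ ∈ t) :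
    low w t Λ + w Λ ≤ ∑ Λ' ∈ t, w Λ' := by
  have hsub : insert Λ (t.filter (fun Λ' => enc Λ' < enc Λ)) ⊆ t := by
    intro y hy
    rw [Finset.mem_insert] at hy
    rcases hy with rfl | hy
    · exact h
    · exact (Finset.mem_filter.mp hy).1
  have := Finset.sum_le_sum_of_subset (f := w) hsub
  rwa [Finset.sum_insert (by simp [Finset.mem_filter]), add_comm] at this

variable {c a x : ℝ}

lemma exists_slot {t : Finset YoungDiagram} (hc : 0 < c) (hx : a ≤ x)
    (hx2 : x < a + (∑ Λ ∈ t, w Λ : ℕ) * c) :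
    ∃ Λ ∈ t, a + (low w t Λ : ℕ) * c ≤ x ∧ x < a + ((low w t Λ + w Λ : ℕ) : ℝ) * c := by
  have ht : t.Nonempty := by
    rcases t.eq_empty_or_nonempty with rfl | h
    · exfalso
      simp only [Finset.sum_empty, Nat.cast_zero, zero_mul, add_zero] at hx2
      linarith
    · exact h
  -- the set of candidates
  set T := t.filter (fun Λ => a + (low w t Λ : ℝ) * c ≤ x) with hT
  have hTne : T.Nonempty := by
    obtain ⟨Λ₀, hΛ₀, hmin⟩ := t.exists_min_image enc ht
    refine ⟨Λ₀, Finset.mem_filter.mpr ⟨hΛ₀, ?_⟩⟩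
    have hlow : low w t Λ₀ = 0 := by
      rw [low, Finset.sum_eq_zero_iff]
      intro y hy
      rw [Finset.mem_filter] at hy
      have := hmin y hy.1
      omega
    rw [hlow]
    simpa using hx
  obtain ⟨Λ, hΛT, hmax⟩ := T.exists_max_image enc hTne
  rw [Finset.mem_filter] at hΛT
  obtain ⟨hΛt, hΛle⟩ := hΛT
  refine ⟨Λ, hΛt, hΛle, ?_⟩
  by_contra hge
  push_neg at hge
  by_cases hbig : ∃ y ∈ t, enc Λ < enc y
  · obtain ⟨y₀, hy₀⟩ := hbig
    obtain ⟨Λ', hΛ', hmin'⟩ := (t.filter (fun y => enc Λ < enc y)).exists_min_image enc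
      ⟨y₀, Finset.mem_filter.mpr hy₀⟩
    rw [Finset.mem_filter] at hΛ'
    have hfe : t.filter (fun Λ'' => enc Λ'' < enc Λ')
        = insert Λ (t.filter (fun Λ'' => enc Λ'' < enc Λ)) := by
      ext y
      rw [Finset.mem_filter, Finset.mem_insert, Finset.mem_filter]
      constructor
      · rintro ⟨hyt, hyl⟩
        rcases Nat.lt_trichotomy (enc y) (enc Λ) with h | h | h
        · exact Or.inr ⟨hyt, h⟩
        · exact Or.inl (enc_injective h)
        · exfalso
          have := hmin' y (Finset.mem_filter.mpr ⟨hyt, h⟩)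
          omega
      · rintro (rfl | ⟨hyt, hyl⟩)
        · exact ⟨hΛt, hΛ'.2⟩
        · exact ⟨hyt, hyl.trans hΛ'.2⟩
    have hlow' : low w t Λ' = low w t Λ + w Λ := by
      rw [low, hfe, Finset.sum_insert (by simp [Finset.mem_filter]), add_comm]
      rfl
    have hΛ'T : Λ' ∈ T := by
      rw [Finset.mem_filter]
      refine ⟨hΛ'.1, ?_⟩
      rw [hlow']
      push_cast
      push_cast at hge
      linarith
    have := hmax Λ' hΛ'T
    omega
  · push_neg at hbig
    have hfe : t = insert Λ (t.filter (fun Λ'' => enc Λ'' < enc Λ)) := by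
      ext y
      rw [Finset.mem_insert, Finset.mem_filter]
      constructor
      · intro hyt
        rcases Nat.lt_trichotomy (enc y) (enc Λ) with h | h | h
        · exact Or.inr ⟨hyt, h⟩
        · exact Or.inl (enc_injective h)
        · exact absurd h (by have := hbig y hyt; omega)
      · rintro (rfl | ⟨hyt, _⟩)
        · exact hΛt
        · exact hyt
    have hsum : ∑ Λ' ∈ t, w Λ' = low w t Λ + w Λ := by
      conv_lhs => rw [hfe]
      rw [Finset.sum_insert (by simp [Finset.mem_filter]), add_comm]
      rfl
    rw [hsum] at hx2
    linarith

lemma unique_slot {t : Finset YoungDiagram} (hc : 0 < c) {Λ₁ Λ₂ : YoungDiagram}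
    (h1 : Λ₁ ∈ t) (h2 : Λ₂ ∈ t)
    (hs1 : a + (low w t Λ₁ : ℝ) * c ≤ x ∧ x < a + ((low w t Λ₁ + w Λ₁ : ℕ) : ℝ) * c)
    (hs2 : a + (low w t Λ₂ : ℝ) * c ≤ x ∧ x < a + ((low w t Λ₂ + w Λ₂ : ℕ) : ℝ) * c) :
    Λ₁ = Λ₂ := by
  rcases Nat.lt_trichotomy (enc Λ₁) (enc Λ₂) with h | h | h
  · exfalso
    have := slot_disjoint w h1 h
    have hr : ((low w t Λ₁ + w Λ₁ : ℕ) : ℝ) ≤ (low w t Λ₂ : ℝ) := by exact_mod_cast this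
    nlinarith [hs1.2, hs2.1]
  · exact enc_injective h
  · exfalso
    have := slot_disjoint w h2 h
    have hr : ((low w t Λ₂ + w Λ₂ : ℕ) : ℝ) ≤ (low w t Λ₁ : ℝ) := by exact_mod_cast this
    nlinarith [hs2.2, hs1.1]

end slots

end PlancherelAux

namespace PlancherelAux

open Finset YoungDiagram

section path

variable (d : YoungDiagram → ℕ)

/-- The subdivision scale at step `n`. -/
noncomputable def sc (n : ℕ) : ℝ := (((n+1).factorial : ℝ))⁻¹

lemma sc_pos (n : ℕ) : 0 < sc n := by
  rw [sc]
  positivity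

/-- The defining condition for the slot of `Λ` within the interval of `lam` at level `n`. -/
def Slot (n : ℕ) (lam : YoungDiagram) (a x : ℝ) (Λ : YoungDiagram) : Prop :=
  a + (low d (UP lam) Λ : ℝ) * sc n ≤ x ∧
    x < a + ((low d (UP lam) Λ + d Λ : ℕ) : ℝ) * sc n

open Classical in
/-- Select the cover of `lam` whose slot contains `x` (junk default otherwise). -/
noncomputable def pick (n : ℕ) (lam : YoungDiagram) (a x : ℝ) : YoungDiagram :=
  if h : ∃ Λ ∈ UP lam, Slot d n lam a x Λ then h.choose else addCell lam 0

lemma pick_covers (n : ℕ) (lam : YoungDiagram) (a x : ℝ) :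
    CoversBelow lam (pick d n lam a x) := by
  rw [pick]
  split_ifs with h
  · exact mem_UP.mp h.choose_spec.1
  · exact coversBelow_addCell trivial

open Classical in
lemma pick_spec {n : ℕ} {lam : YoungDiagram} {a x : ℝ}
    (h : ∃ Λ ∈ UP lam, Slot d n lam a x Λ) :
    pick d n lam a x ∈ UP lam ∧ Slot d n lam a x (pick d n lam a x) := by
  rw [pick, dif_pos h]
  exact h.choose_spec

lemma pick_eq {n : ℕ} {lam Λ : YoungDiagram} {a x : ℝ}
    (hΛ : Λ ∈ UP lam) (hslot : Slot d n lam a x Λ) : pick d n lam a x = Λ := by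
  have h : ∃ Λ ∈ UP lam, Slot d n lam a x Λ := ⟨Λ, hΛ, hslot⟩
  obtain ⟨hmem, hs⟩ := pick_spec d h
  exact unique_slot d (sc_pos n) hmem hΛ hs hslot

/-- One step of the interval subdivision dynamics. -/
noncomputable def stepD (n : ℕ) (p : YoungDiagram × ℝ) (x : ℝ) : YoungDiagram × ℝ :=
  (pick d n p.1 p.2 x, p.2 + (low d (UP p.1) (pick d n p.1 p.2 x) : ℝ) * sc n)

/-- The interval subdivision dynamics: current diagram and left endpoint. -/
noncomputable def q : ℕ → ℝ → YoungDiagram × ℝ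
  | 0, _ => (⊥, (0:ℝ))
  | (n+1), x => stepD d n (q n x) x

lemma q_zero (x : ℝ) : q d 0 x = (⊥, 0) := rfl

lemma q_succ (n : ℕ) (x : ℝ) : q d (n+1) x = stepD d n (q d n x) x := rfl

lemma stepD_fst (n : ℕ) (p : YoungDiagram × ℝ) (x : ℝ) :
    (stepD d n p x).1 = pick d n p.1 p.2 x := rfl

lemma stepD_snd (n : ℕ) (p : YoungDiagram × ℝ) (x : ℝ) :
    (stepD d n p x).2 = p.2 + (low d (UP p.1) (pick d n p.1 p.2 x) : ℝ) * sc n := rfl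

lemma q_covers (n : ℕ) (x : ℝ) : CoversBelow (q d n x).1 (q d (n+1) x).1 := by
  rw [q_succ, stepD_fst]
  exact pick_covers d n _ _ x

lemma q_card (n : ℕ) (x : ℝ) : (q d n x).1.card = n := by
  induction n with
  | zero => exact card_bot
  | succ n IH =>
    have := (q_covers d n x).2
    omega

lemma factorial_succ_real (n : ℕ) :
    ((n+1) : ℝ) * sc n = ((n.factorial : ℝ))⁻¹ := by
  rw [sc, Nat.factorial_succ]
  push_cast
  rw [mul_inv]
  rw [← mul_assoc, mul_inv_cancel₀ (by positivity), one_mul]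

variable {d}

lemma sum_UP_mul_sc (hd : CountsSYT' d) (lam : YoungDiagram) {n : ℕ} (hcard : lam.card = n) :
    ((∑ Λ ∈ UP lam, d Λ : ℕ) : ℝ) * sc n = (d lam : ℝ) * ((n.factorial : ℝ))⁻¹ := by
  rw [key hd n lam hcard]
  push_cast
  rw [mul_comm ((n:ℝ) + 1) _, mul_assoc]
  congr 1
  exact_mod_cast factorial_succ_real n

/-- The fundamental invariant : for `x ∈ [0,1)`, `x` lies in the current interval. -/
lemma q_invariant (hd : CountsSYT' d) {x : ℝ} (hx : x ∈ Set.Ico (0:ℝ) 1) (n : ℕ) :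
    (q d n x).2 ≤ x ∧ x < (q d n x).2 + (d (q d n x).1 : ℝ) * ((n.factorial : ℝ))⁻¹ := by
  induction n with
  | zero =>
    rw [q_zero]
    simp only [Nat.factorial_zero, Nat.cast_one, inv_one, mul_one, hd.1]
    simpa using ⟨hx.1, hx.2⟩
  | succ n IH =>
    obtain ⟨h1, h2⟩ := IH
    set lam := (q d n x).1
    set a := (q d n x).2
    have hcond : ∃ Λ ∈ UP lam, Slot d n lam a x Λ := by
      apply exists_slot d (sc_pos n) h1
      rw [sum_UP_mul_sc hd lam (q_card d n x)]
      exact h2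
    obtain ⟨hmem, hs1, hs2⟩ := pick_spec d hcond
    have hq1 : (q d (n+1) x).1 = pick d n lam a x := by rw [q_succ, stepD_fst]
    have hq2 : (q d (n+1) x).2 = a + (low d (UP lam) (pick d n lam a x) : ℝ) * sc n := by
      rw [q_succ, stepD_snd]
    rw [hq1, hq2]
    refine ⟨hs1, ?_⟩
    show x < a + (low d (UP lam) (pick d n lam a x) : ℝ) * sc n
        + (d (pick d n lam a x) : ℝ) * sc n
    have h4 : x < a + ((low d (UP lam) (pick d n lam a x) + d (pick d n lam a x) : ℕ) : ℝ)
        * sc n := hs2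
    push_cast at h4
    linarith

end path

end PlancherelAux

namespace PlancherelAux

open Finset YoungDiagram

section meas

variable (d : YoungDiagram → ℕ)

lemma measurable_slotSet (n : ℕ) (lam Λ' : YoungDiagram) :
    MeasurableSet {p : ℝ × ℝ | Slot d n lam p.1 p.2 Λ'} := by
  have : {p : ℝ × ℝ | Slot d n lam p.1 p.2 Λ'}
      = {p : ℝ × ℝ | p.1 + (low d (UP lam) Λ' : ℝ) * sc n ≤ p.2}
        ∩ {p : ℝ × ℝ | p.2 < p.1 + ((low d (UP lam) Λ' + d Λ' : ℕ) : ℝ) * sc n} := by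
    ext p
    simp only [Set.mem_setOf_eq, Set.mem_inter_iff, Slot]
  rw [this]
  exact (measurableSet_le (by fun_prop) (by fun_prop)).inter
    (measurableSet_lt (by fun_prop) (by fun_prop))

lemma measurable_pickfun (n : ℕ) (lam : YoungDiagram) :
    Measurable (fun p : ℝ × ℝ => pick d n lam p.1 p.2) := by
  apply measurable_to_countable'
  intro Λ
  have hfib : (fun p : ℝ × ℝ => pick d n lam p.1 p.2) ⁻¹' {Λ} =
      ({p : ℝ × ℝ | Λ ∈ UP lam ∧ Slot d n lam p.1 p.2 Λ} ∪
        ({p : ℝ × ℝ | ¬ ∃ Λ' ∈ UP lam, Slot d n lam p.1 p.2 Λ'}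
          ∩ {p : ℝ × ℝ | Λ = addCell lam 0})) := by
    ext p
    simp only [Set.mem_preimage, Set.mem_singleton_iff, Set.mem_union, Set.mem_inter_iff,
      Set.mem_setOf_eq]
    by_cases hcond : ∃ Λ' ∈ UP lam, Slot d n lam p.1 p.2 Λ'
    · obtain ⟨hm, hs⟩ := pick_spec d hcond
      constructor
      · rintro rfl
        exact Or.inl ⟨hm, hs⟩
      · rintro (⟨h1, h2⟩ | ⟨h1, -⟩)
        · exact pick_eq d h1 h2
        · exact absurd hcond h1
    · rw [pick, dif_neg hcond]
      constructor
      · rintro rfl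
        exact Or.inr ⟨hcond, rfl⟩
      · rintro (⟨h1, h2⟩ | ⟨-, h2⟩)
        · exact absurd ⟨Λ, h1, h2⟩ hcond
        · exact h2.symm
  rw [hfib]
  have hD : {p : ℝ × ℝ | ¬ ∃ Λ' ∈ UP lam, Slot d n lam p.1 p.2 Λ'}
      = (⋃ Λ' ∈ UP lam, {p : ℝ × ℝ | Slot d n lam p.1 p.2 Λ'})ᶜ := by
    ext p
    simp only [Set.mem_setOf_eq, Set.mem_compl_iff, Set.mem_iUnion, exists_prop]
  refine MeasurableSet.union ?_ ?_
  · by_cases hΛ : Λ ∈ UP lam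
    · have : {p : ℝ × ℝ | Λ ∈ UP lam ∧ Slot d n lam p.1 p.2 Λ}
          = {p : ℝ × ℝ | Slot d n lam p.1 p.2 Λ} := by
        ext p; simp [hΛ]
      rw [this]
      exact measurable_slotSet d n lam Λ
    · have : {p : ℝ × ℝ | Λ ∈ UP lam ∧ Slot d n lam p.1 p.2 Λ} = ∅ := by
        ext p; simp [hΛ]
      rw [this]
      exact MeasurableSet.empty
  · refine MeasurableSet.inter ?_ ?_
    · rw [hD]
      exact (Finset.measurableSet_biUnion _ (fun Λ' _ => measurable_slotSet d n lam Λ')).compl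
    · by_cases hΛ : Λ = addCell lam 0
      · have : {p : ℝ × ℝ | Λ = addCell lam 0} = Set.univ := by ext p; simp [hΛ]
        rw [this]; exact MeasurableSet.univ
      · have : {p : ℝ × ℝ | Λ = addCell lam 0} = ∅ := by ext p; simp [hΛ]
        rw [this]; exact MeasurableSet.empty

lemma measurable_stepD_slice (n : ℕ) (lam : YoungDiagram) :
    Measurable (fun p : ℝ × ℝ => stepD d n (lam, p.1) p.2) := by
  have hpick : Measurable (fun p : ℝ × ℝ => pick d n lam p.1 p.2) := measurable_pickfun d n lam
  refine Measurable.prod ?_ ?_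
  · exact hpick
  · have hlow : Measurable (fun Λ : YoungDiagram => ((low d (UP lam) Λ : ℕ) : ℝ)) :=
      fun _ _ => MeasurableSpace.measurableSet_top
    exact measurable_fst.add ((hlow.comp hpick).mul_const _)

lemma measurable_q (n : ℕ) : Measurable (fun x : ℝ => q d n x) := by
  induction n with
  | zero =>
    have : (fun x : ℝ => q d 0 x) = fun _ => ((⊥ : YoungDiagram), (0:ℝ)) := by
      funext x; rw [q_zero]
    rw [this]
    exact measurable_const
  | succ n IH =>
    have hstep : Measurable (fun pr : (ℝ × ℝ) × YoungDiagram => stepD d n (pr.2, pr.1.1) pr.1.2) :=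
      measurable_from_prod_countable_left (fun lam => measurable_stepD_slice d n lam)
    have heq : (fun x : ℝ => q d (n+1) x)
        = (fun pr : (ℝ × ℝ) × YoungDiagram => stepD d n (pr.2, pr.1.1) pr.1.2)
          ∘ (fun x : ℝ => (((q d n x).2, x), (q d n x).1)) := by
      funext x
      rw [Function.comp_apply, q_succ]
    rw [heq]
    exact hstep.comp (((IH.snd).prodMk measurable_id).prodMk IH.fst)

end meas

end PlancherelAux


namespace PlancherelAux

open Finset YoungDiagram

lemma finPath_card {n : ℕ} {s : Fin (n+1) → YoungDiagram} (hs : IsFinPath s) :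
    ∀ m : ℕ, ∀ hm : m < n + 1, (s ⟨m, hm⟩).card = m := by
  intro m
  induction m with
  | zero =>
    intro hm
    rw [show (⟨0, hm⟩ : Fin (n+1)) = 0 from rfl, hs.1, card_bot]
  | succ m IH =>
    intro hm
    have hmn : m < n := by omega
    have hc := hs.2 ⟨m, hmn⟩
    have h1 : (⟨m, hmn⟩ : Fin n).castSucc = ⟨m, by omega⟩ := rfl
    have h2 : (⟨m, hmn⟩ : Fin n).succ = ⟨m+1, by omega⟩ := rfl
    rw [h1, h2] at hc
    have hIH := IH (by omega)
    have := hc.2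
    omega

lemma isFinPath_restrict {n : ℕ} {s : Fin (n+2) → YoungDiagram} (hs : IsFinPath s) :
    IsFinPath (fun k : Fin (n+1) => s k.castSucc) := by
  refine ⟨hs.1, ?_⟩
  intro k
  show CoversBelow (s k.castSucc.castSucc) (s k.succ.castSucc)
  rw [← Fin.succ_castSucc]
  exact hs.2 k.castSucc

variable {d : YoungDiagram → ℕ}

lemma cylinder_interval (hd : CountsSYT' d) :
    ∀ n : ℕ, ∀ s : Fin (n+1) → YoungDiagram, IsFinPath s →
    ∃ a : ℝ, 0 ≤ a ∧ a + (d (s (Fin.last n)) : ℝ) * ((n.factorial : ℝ))⁻¹ ≤ 1 ∧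
      (∀ x ∈ Set.Ico (0:ℝ) 1,
        ((∀ k : Fin (n+1), (q d (k : ℕ) x).1 = s k) ↔
          (a ≤ x ∧ x < a + (d (s (Fin.last n)) : ℝ) * ((n.factorial : ℝ))⁻¹))) ∧
      (∀ x ∈ Set.Ico (0:ℝ) 1, (∀ k : Fin (n+1), (q d (k : ℕ) x).1 = s k) →
        (q d n x).2 = a) := by
  intro n
  induction n with
  | zero =>
    intro s hs
    refine ⟨0, le_refl 0, ?_, ?_, ?_⟩
    · rw [show s (Fin.last 0) = ⊥ from hs.1, hd.1]
      norm_num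
    · intro x hx
      rw [show s (Fin.last 0) = ⊥ from hs.1, hd.1]
      constructor
      · intro _
        norm_num
        exact ⟨hx.1, hx.2⟩
      · intro _ k
        have hk0 : (k : ℕ) = 0 := by have := k.isLt; omega
        rw [show k = 0 from Fin.ext hk0, show ((0 : Fin 1) : ℕ) = 0 from rfl, q_zero, hs.1]
    · intro x _ _
      rw [q_zero]
  | succ n IH =>
    intro s hs
    set s' : Fin (n+1) → YoungDiagram := fun k => s k.castSucc with hs'def
    have hs' : IsFinPath s' := isFinPath_restrict hs
    obtain ⟨a, ha0, ha1, hiff, hlo⟩ := IH s' hs'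
    set lam : YoungDiagram := s (Fin.last n).castSucc with hlamdef
    have hslast : s' (Fin.last n) = lam := rfl
    set lamtop : YoungDiagram := s (Fin.last (n+1)) with hlamtopdef
    have hcover : CoversBelow lam lamtop := by
      have := hs.2 (Fin.last n)
      rwa [Fin.succ_last] at this
    have hmem : lamtop ∈ UP lam := mem_UP.mpr hcover
    have hcardlam : lam.card = n := by
      have := finPath_card hs n (by omega)
      exact this
    set a' : ℝ := a + (low d (UP lam) lamtop : ℝ) * sc n with ha'def
    -- the parent interval bound
    have hbound : a' + (d lamtop : ℝ) * sc n ≤ a + (d lam : ℝ) * ((n.factorial : ℝ))⁻¹ := by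
      have h1 : low d (UP lam) lamtop + d lamtop ≤ ∑ Λ' ∈ UP lam, d Λ' := slot_total d hmem
      have h2 : ((low d (UP lam) lamtop + d lamtop : ℕ) : ℝ) * sc n
          ≤ ((∑ Λ' ∈ UP lam, d Λ' : ℕ) : ℝ) * sc n := by
        apply mul_le_mul_of_nonneg_right _ (le_of_lt (sc_pos n))
        exact_mod_cast h1
      rw [sum_UP_mul_sc hd lam hcardlam] at h2
      push_cast at h2
      rw [ha'def]
      linarith
    have hsc : ((n+1).factorial : ℝ)⁻¹ = sc n := rfl
    have hrest : ∀ x : ℝ, (∀ k : Fin (n+2), (q d (k : ℕ) x).1 = s k) →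
        (∀ k : Fin (n+1), (q d (k : ℕ) x).1 = s' k) := by
      intro x hall k
      exact hall k.castSucc
    have hlownn : (0:ℝ) ≤ (low d (UP lam) lamtop : ℝ) * sc n :=
      mul_nonneg (Nat.cast_nonneg _) (le_of_lt (sc_pos n))
    refine ⟨a', by rw [ha'def]; linarith, ?_, ?_, ?_⟩
    · rw [hsc]
      calc a' + (d lamtop : ℝ) * sc n ≤ a + (d lam : ℝ) * ((n.factorial : ℝ))⁻¹ := hbound
      _ ≤ 1 := ha1
    · intro x hx
      constructor
      · intro hall
        have hres := hrest x hall
        obtain ⟨hax, hax2⟩ := (hiff x hx).mp hres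
        have hloa : (q d n x).2 = a := hlo x hx hres
        have hq1lam : (q d n x).1 = lam := hres (Fin.last n)
        -- the slot condition holds
        have hcond : ∃ Λ ∈ UP (q d n x).1, Slot d n (q d n x).1 (q d n x).2 x Λ := by
          apply exists_slot d (sc_pos n) (by rw [hloa]; exact hax)
          rw [sum_UP_mul_sc hd (q d n x).1 (q_card d n x), hq1lam, hloa]
          exact hax2
        obtain ⟨hpmem, hps1, hps2⟩ := pick_spec d hcond
        have hpicktop : pick d n (q d n x).1 (q d n x).2 x = lamtop := by
          have := hall (Fin.last (n+1))
          rw [show ((Fin.last (n+1) : Fin (n+2)) : ℕ) = n + 1 from rfl] at this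
          rw [hlamtopdef, ← this, q_succ, stepD_fst]
        rw [hpicktop, hq1lam, hloa] at hps1 hps2
        rw [hsc]
        constructor
        · exact hps1
        · have : x < a + ((low d (UP lam) lamtop + d lamtop : ℕ) : ℝ) * sc n := hps2
          push_cast at this
          rw [ha'def]
          linarith
      · intro hax
        rw [hsc] at hax
        obtain ⟨hax1, hax2⟩ := hax
        have hxin : a ≤ x ∧ x < a + (d (s' (Fin.last n)) : ℝ) * ((n.factorial : ℝ))⁻¹ := by
          constructor
          · have haa' : a ≤ a' := by rw [ha'def]; linarith
            linarith
          · rw [hslast]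
            linarith [hbound]
        have hres := (hiff x hx).mpr hxin
        have hloa : (q d n x).2 = a := hlo x hx hres
        have hq1lam : (q d n x).1 = lam := hres (Fin.last n)
        have hslot : Slot d n lam a x lamtop := by
          constructor
          · exact hax1
          · push_cast
            rw [ha'def] at hax1 hax2
            linarith
        have hpick : pick d n (q d n x).1 (q d n x).2 x = lamtop := by
          rw [hq1lam, hloa]
          exact pick_eq d hmem hslot
        intro k
        refine Fin.lastCases ?_ ?_ k
        · rw [show ((Fin.last (n+1) : Fin (n+2)) : ℕ) = n + 1 from rfl, q_succ, stepD_fst, hpick]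
        · intro i
          have := hres i
          rwa [show ((i.castSucc : Fin (n+2)) : ℕ) = (i : ℕ) from rfl]
    · intro x hx hall
      have hres := hrest x hall
      have hloa : (q d n x).2 = a := hlo x hx hres
      have hq1lam : (q d n x).1 = lam := hres (Fin.last n)
      have hpicktop : pick d n (q d n x).1 (q d n x).2 x = lamtop := by
        have := hall (Fin.last (n+1))
        rw [show ((Fin.last (n+1) : Fin (n+2)) : ℕ) = n + 1 from rfl] at this
        rw [hlamtopdef, ← this, q_succ, stepD_fst]
      rw [q_succ, stepD_snd, hpicktop, hq1lam, hloa]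

end PlancherelAux

open PlancherelAux

theorem plancherel_measure_exists (d : YoungDiagram → ℕ) (hd : CountsSYT d) :
    ∃ Pl : MeasureTheory.Measure YoungPathSpace,
      MeasureTheory.IsProbabilityMeasure Pl ∧
      ∀ (n : ℕ) (s : Fin (n + 1) → YoungDiagram), IsFinPath s →
        Pl (Cyl s) = (d (s (Fin.last n)) : ℝ≥0∞) / (n.factorial : ℝ≥0∞) := by
  classical
  have hd' : CountsSYT' d := hd
  have hpath : ∀ x : ℝ, IsYoungPath (fun k => (q d k x).1) :=
    fun x => ⟨congrArg Prod.fst (q_zero d x), fun k => q_covers d k x⟩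
  set F : ℝ → YoungPathSpace := fun x => ⟨fun k => (q d k x).1, hpath x⟩ with hFdef
  have hF : Measurable F := by
    apply Measurable.subtype_mk
    apply measurable_pi_lambda
    intro k
    exact (measurable_q d k).fst
  haveI : MeasureTheory.IsProbabilityMeasure
      (MeasureTheory.volume.restrict (Set.Ico (0:ℝ) 1)) := by
    constructor
    rw [MeasureTheory.Measure.restrict_apply_univ, Real.volume_Ico]
    norm_num
  refine ⟨(MeasureTheory.volume.restrict (Set.Ico (0:ℝ) 1)).map F, ?_, ?_⟩
  · exact MeasureTheory.Measure.isProbabilityMeasure_map hF.aemeasurable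
  · intro n s hs
    have hCylMeas : MeasurableSet (Cyl s) := by
      have hC : Cyl s = ⋂ k : Fin (n + 1),
          (fun T : YoungPathSpace => T.1 (k : ℕ)) ⁻¹' {s k} := by
        ext T
        simp [Cyl, Set.mem_iInter]
      rw [hC]
      exact MeasurableSet.iInter (fun k =>
        ((measurable_pi_apply (k : ℕ)).comp measurable_subtype_coe)
          MeasurableSpace.measurableSet_top)
    rw [MeasureTheory.Measure.map_apply hF hCylMeas,
      MeasureTheory.Measure.restrict_apply (hF hCylMeas)]
    obtain ⟨a, ha0, ha1, hiff, -⟩ := cylinder_interval hd' n s hs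
    have hseteq : F ⁻¹' Cyl s ∩ Set.Ico 0 1
        = Set.Ico a (a + (d (s (Fin.last n)) : ℝ) * ((n.factorial : ℝ))⁻¹) := by
      ext x
      simp only [Set.mem_inter_iff, Set.mem_preimage, Cyl, Set.mem_setOf_eq, Set.mem_Ico]
      constructor
      · rintro ⟨hmem, hx⟩
        exact (hiff x hx).mp (fun k => hmem k)
      · intro hax
        have hx : x ∈ Set.Ico (0:ℝ) 1 := by
          constructor
          · linarith [hax.1]
          · calc x < a + (d (s (Fin.last n)) : ℝ) * ((n.factorial : ℝ))⁻¹ := hax.2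
            _ ≤ 1 := ha1
        exact ⟨(hiff x hx).mpr hax, hx⟩
    rw [hseteq, Real.volume_Ico]
    have hsub : a + (d (s (Fin.last n)) : ℝ) * ((n.factorial : ℝ))⁻¹ - a
        = (d (s (Fin.last n)) : ℝ) * ((n.factorial : ℝ))⁻¹ := by ring
    rw [hsub, ← div_eq_mul_inv, ENNReal.ofReal_div_of_pos (by positivity),
      ENNReal.ofReal_natCast, ENNReal.ofReal_natCast]
end
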